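/- arXiv:0812.1612 — 9 statements merged into one kernel-verified Lean document; each statement's English description precedes it below -/
import Mathlib

section
/- Let k be a field of characteristic zero and let R be a commutative k-algebra equipped with a Poisson bracket. Then every minimal prime ideal of R is a Poisson ideal. -/
/-- A Poisson bracket on a commutative `k`-algebra `R`: a `k`-bilinear,
antisymmetric map satisfying the Jacobi and Leibniz identities. -/
structure PoissonBracket (k : Type*) (R : Type*) [CommRing k] [CommRing R] [Algebra k R] where
  bracket : R → R → R
  add_left : ∀ a b c : R, bracket (a + b) c = bracket a c + bracket b c
  add_right : ∀ a b c : R, bracket a (b + c) = bracket a b + bracket a c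
  smul_left : ∀ (t : k) (a b : R), bracket (t • a) b = t • bracket a b
  smul_right : ∀ (t : k) (a b : R), bracket a (t • b) = t • bracket a b
  antisymm : ∀ a b : R, bracket a b = - bracket b a
  jacobi : ∀ a b c : R,
    bracket a (bracket b c) + bracket b (bracket c a) + bracket c (bracket a b) = 0
  leibniz : ∀ a b c : R, bracket a (b * c) = bracket a b * c + b * bracket a c

/-- An ideal `I` is a Poisson ideal if `{R, I} ⊆ I`. -/
def IsPoissonIdeal {k R : Type*} [CommRing k] [CommRing R] [Algebra k R]
    (B : PoissonBracket k R) (I : Ideal R) : Prop :=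
  ∀ a : R, ∀ x ∈ I, B.bracket a x ∈ I

/-- The Poisson core of an ideal `J`: the largest Poisson ideal contained in `J`,
i.e. the sum of all Poisson ideals contained in `J`. -/
def poissonCore {k R : Type*} [CommRing k] [CommRing R] [Algebra k R]
    (B : PoissonBracket k R) (J : Ideal R) : Ideal R :=
  sSup {I : Ideal R | IsPoissonIdeal B I ∧ I ≤ J}

/-- A Poisson-primitive ideal: the Poisson core of some maximal ideal. -/
def IsPoissonPrimitive {k R : Type*} [CommRing k] [CommRing R] [Algebra k R]
    (B : PoissonBracket k R) (P : Ideal R) : Prop :=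
  ∃ m : Ideal R, m.IsMaximal ∧ poissonCore B m = P

/-- The bracket with a fixed element, viewed as an `ℕ`-derivation. -/
def PoissonBracket.toDerivation {k R : Type*} [CommRing k] [CommRing R] [Algebra k R]
    (B : PoissonBracket k R) (a : R) : Derivation ℕ R R where
  toFun := B.bracket a
  map_add' := B.add_right a
  map_smul' := fun n x => by
    show B.bracket a (n • x) = n • B.bracket a x
    have h0 : B.bracket a 0 = 0 := by
      have h := B.add_right a 0 0
      simp only [add_zero] at h
      exact (left_eq_add.mp h)
    induction n with
    | zero => simpa using h0
    | succ n ih =>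
        have h1 : (n + 1) • x = n • x + x := by rw [add_nsmul, one_nsmul]
        rw [h1, B.add_right, ih, add_nsmul, one_nsmul]
  map_one_eq_zero' := by
    show B.bracket a 1 = 0
    have h := B.leibniz a 1 1
    simp only [mul_one, one_mul] at h
    exact (left_eq_add.mp h)
  leibniz' := fun x y => by
    show B.bracket a (x * y) = x • B.bracket a y + y • B.bracket a x
    rw [B.leibniz a x y]
    simp only [smul_eq_mul]
    ring

/-- Cancellation of nonzero natural numbers in an algebra over a char-zero field. -/
theorem nat_cancel {k R : Type*} [Field k] [CharZero k] [CommRing R] [Algebra k R]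
    (n : ℕ) (hn : n ≠ 0) (r : R) (h : (n : R) * r = 0) : r = 0 := by
  have h1 : ((n : k)) • r = 0 := by
    rw [Algebra.smul_def, map_natCast]; exact h
  have h2 : ((n : k)⁻¹) • ((n : k) • r) = r := by
    rw [smul_smul, inv_mul_cancel₀ (by exact_mod_cast hn), one_smul]
  rw [h1, smul_zero] at h2
  exact h2.symm

/-- In characteristic zero, every minimal prime ideal is a Poisson ideal. -/
theorem minimalPrime_isPoissonIdeal (k R : Type*) [Field k] [CharZero k] [CommRing R]
    [Algebra k R] (B : PoissonBracket k R) (Q : Ideal R) (hQ : Q ∈ minimalPrimes R) :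
    IsPoissonIdeal B Q := by
  intro a x hx
  haveI hQp : Q.IsPrime := hQ.1.1
  set D := B.toDerivation a with hD
  -- x becomes nilpotent in the localization at Q, so s * x ^ m = 0 for some s ∉ Q
  obtain ⟨s, m, hsm⟩ : ∃ s : Q.primeCompl, ∃ m : ℕ, (s : R) * x ^ m = 0 := by
    have hmem : algebraMap R (Localization Q.primeCompl) x ∈
        IsLocalRing.maximalIdeal (Localization Q.primeCompl) := by
      exact (IsLocalization.AtPrime.to_map_mem_maximal_iff
        (Localization Q.primeCompl) Q x).mpr hx
    haveI := Ring.KrullDimLE.of_isLocalization Q hQ (Localization Q.primeCompl)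
    obtain ⟨m, hm⟩ := (Ring.KrullDimLE.isNilpotent_iff_mem_maximalIdeal).mpr hmem
    rw [← map_pow] at hm
    obtain ⟨c, hc⟩ := (IsLocalization.map_eq_zero_iff Q.primeCompl _ _).mp hm
    exact ⟨c, m, hc⟩
  set y := D x with hy
  -- Key inductive step
  have step : ∀ (p q b : ℕ), (s : R) ^ (b + 1) * x ^ (p + 1) * y ^ q = 0 →
      (s : R) ^ (b + 2) * x ^ p * y ^ (q + 2) = 0 := by
    intro p q b E
    have E' : (s : R) ^ (b + 1) * x ^ (p + 1) * y ^ (q + 1) = 0 := by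
      have : (s : R) ^ (b + 1) * x ^ (p + 1) * y ^ (q + 1)
          = ((s : R) ^ (b + 1) * x ^ (p + 1) * y ^ q) * y := by ring
      rw [this, E, zero_mul]
    have h0 : D ((s : R) ^ (b + 1) * x ^ (p + 1) * y ^ (q + 1)) = 0 := by
      rw [E', map_zero]
    have hexp : D ((s : R) ^ (b + 1) * x ^ (p + 1) * y ^ (q + 1))
        = ((b + 1 : ℕ) : R) * (s : R) ^ b * D s * (x ^ (p + 1) * y ^ (q + 1))
          + ((p + 1 : ℕ) : R) * x ^ p * y * ((s : R) ^ (b + 1) * y ^ (q + 1))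
          + ((q + 1 : ℕ) : R) * y ^ q * D y * ((s : R) ^ (b + 1) * x ^ (p + 1)) := by
      rw [Derivation.leibniz, Derivation.leibniz]
      rw [Derivation.leibniz_pow, Derivation.leibniz_pow, Derivation.leibniz_pow]
      simp only [Nat.add_sub_cancel, smul_eq_mul, ← hy]
      push_cast
      ring
    rw [hexp] at h0
    -- multiply by s
    have h1 : ((p + 1 : ℕ) : R) * ((s : R) ^ (b + 2) * x ^ p * y ^ (q + 2)) = 0 := by
      have h2 := congrArg (fun z => (s : R) * z) h0
      simp only [mul_zero] at h2
      have h3 : (s : R) * (((b + 1 : ℕ) : R) * (s : R) ^ b * D s * (x ^ (p + 1) * y ^ (q + 1))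
          + ((p + 1 : ℕ) : R) * x ^ p * y * ((s : R) ^ (b + 1) * y ^ (q + 1))
          + ((q + 1 : ℕ) : R) * y ^ q * D y * ((s : R) ^ (b + 1) * x ^ (p + 1)))
          = ((b + 1 : ℕ) : R) * D s * y * ((s : R) ^ (b + 1) * x ^ (p + 1) * y ^ q)
          + ((q + 1 : ℕ) : R) * D y * (s : R) * ((s : R) ^ (b + 1) * x ^ (p + 1) * y ^ q)
          + ((p + 1 : ℕ) : R) * ((s : R) ^ (b + 2) * x ^ p * y ^ (q + 2)) := by
        ring
      rw [h3, E] at h2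
      simpa using h2
    exact nat_cancel (k := k) (p + 1) (Nat.succ_ne_zero p) _ h1
  -- Iterate the step
  have iter : ∀ p q b : ℕ, (s : R) ^ (b + 1) * x ^ p * y ^ q = 0 →
      ∃ c : ℕ, (s : R) ^ (c + 1) * y ^ (q + 2 * p) = 0 := by
    intro p
    induction p with
    | zero =>
        intro q b h
        refine ⟨b, ?_⟩
        simpa using h
    | succ p ih =>
        intro q b h
        have h' := step p q b h
        obtain ⟨c, hc⟩ := ih (q + 2) (b + 1) h'
        refine ⟨c, ?_⟩
        have : q + 2 + 2 * p = q + 2 * (p + 1) := by ring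
        rwa [this] at hc
  obtain ⟨c, hc⟩ := iter m 0 0 (by simpa using hsm)
  -- conclude y ∈ Q
  have hmemQ : (s : R) ^ (c + 1) * y ^ (0 + 2 * m) ∈ Q := by rw [hc]; exact Q.zero_mem
  have hsQ : (s : R) ^ (c + 1) ∉ Q := fun h => s.2 (hQp.mem_of_pow_mem _ h)
  have hyQ : y ^ (0 + 2 * m) ∈ Q := by
    rcases hQp.mem_or_mem hmemQ with h | h
    · exact absurd h hsQ
    · exact h
  by_cases hm0 : m = 0
  · -- then s * 1 = 0, so s = 0 ∈ Q, contradiction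
    exfalso
    apply s.2
    have : (s : R) = 0 := by simpa [hm0] using hsm
    rw [this]; exact Q.zero_mem
  · have : 0 + 2 * m ≠ 0 := by omega
    exact hQp.mem_of_pow_mem _ hyQ
end

section
/- Let k be a field of characteristic zero and let R be a commutative noetherian k-algebra equipped with a Poisson bracket. Then every Poisson-prime ideal of R is a prime ideal; consequently the Poisson-prime ideals of R coincide with the prime ideals that are Poisson ideals. -/
/-- A Poisson-prime ideal: a proper Poisson ideal `P` such that whenever a product of
Poisson ideals lies in `P`, one of them lies in `P`. -/
def IsPoissonPrime {k R : Type*} [CommRing k] [CommRing R] [Algebra k R]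
    (B : PoissonBracket k R) (P : Ideal R) : Prop :=
  P ≠ ⊤ ∧ IsPoissonIdeal B P ∧
    ∀ I J : Ideal R, IsPoissonIdeal B I → IsPoissonIdeal B J → I * J ≤ P → I ≤ P ∨ J ≤ P

section Aux
variable {k R : Type*} [CommRing k] [CommRing R] [Algebra k R]

/-- The derivation `{a, -}` associated to a Poisson bracket. -/
def PoissonBracket.deriv (B : PoissonBracket k R) (a : R) : Derivation k R R :=
  Derivation.mk'
    { toFun := B.bracket a
      map_add' := B.add_right a
      map_smul' := fun t x => B.smul_right t a x }
    (fun b c => by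
      show B.bracket a (b * c) = b • B.bracket a c + c • B.bracket a b
      rw [smul_eq_mul, smul_eq_mul, B.leibniz]; ring)

@[simp] lemma PoissonBracket.deriv_apply (B : PoissonBracket k R) (a x : R) :
    B.deriv a x = B.bracket a x := rfl

lemma mul_poisson {B : PoissonBracket k R} {I J : Ideal R}
    (hI : IsPoissonIdeal B I) (hJ : IsPoissonIdeal B J) : IsPoissonIdeal B (I * J) := by
  intro a x hx
  refine Submodule.mul_induction_on hx ?_ ?_
  · intro i hi j hj
    rw [B.leibniz]
    exact add_mem (Ideal.mul_mem_mul (hI a i hi) hj) (Ideal.mul_mem_mul hi (hJ a j hj))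
  · intro z w hz hw
    rw [B.add_right]; exact add_mem hz hw

lemma top_poisson (B : PoissonBracket k R) : IsPoissonIdeal B (⊤ : Ideal R) :=
  fun _ _ _ => trivial

lemma pow_poisson {B : PoissonBracket k R} {I : Ideal R} (hI : IsPoissonIdeal B I) :
    ∀ n : ℕ, IsPoissonIdeal B (I ^ n)
  | 0 => by rw [pow_zero, Ideal.one_eq_top]; exact top_poisson B
  | n + 1 => by rw [pow_succ]; exact mul_poisson (pow_poisson hI n) hI

lemma prod_poisson {B : PoissonBracket k R} (F : Finset (Ideal R))
    (hF : ∀ I ∈ F, IsPoissonIdeal B I) : IsPoissonIdeal B (∏ I ∈ F, I) := by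
  classical
  induction F using Finset.induction_on with
  | empty => simpa [Ideal.one_eq_top] using top_poisson B
  | @insert _ _ hnotmem ih =>
    rw [Finset.prod_insert hnotmem]
    exact mul_poisson (hF _ (Finset.mem_insert_self _ _))
      (ih fun I hI => hF I (Finset.mem_insert_of_mem hI))

end Aux

lemma cancel_nat_cast (k : Type*) {R : Type*} [Field k] [CharZero k] [CommRing R]
    [Algebra k R] {P : Ideal R} {m : ℕ} (hm : m ≠ 0) {z : R}
    (h : (m : R) * z ∈ P) : z ∈ P := by
  have h2 := P.mul_mem_left (algebraMap k R ((m : k)⁻¹)) h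
  have h3 : algebraMap k R ((m : k)⁻¹) * ((m : R) * z) = z := by
    have h4 : ((m : ℕ) : R) * z = (m : k) • z := by
      rw [Algebra.smul_def, map_natCast]
    rw [h4, ← Algebra.smul_def, smul_smul, inv_mul_cancel₀ (Nat.cast_ne_zero.mpr hm), one_smul]
  rwa [h3] at h2

section CharZero
variable {k R : Type*} [Field k] [CharZero k] [CommRing R] [Algebra k R]

lemma poisson_step {B : PoissonBracket k R} {P : Ideal R} (hP : IsPoissonIdeal B P)
    (a x : R) (i m : ℕ)
    (h : x ^ (m + 1) * (B.bracket a x) ^ (2 * i) ∈ P) :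
    x ^ m * (B.bracket a x) ^ (2 * i + 2) ∈ P := by
  set D := B.deriv a with hD
  have hDx : D x = B.bracket a x := rfl
  rw [← hDx] at h ⊢
  have hDP : ∀ z ∈ P, D z ∈ P := fun z hz => hP a z hz
  have h1 : D (x ^ (m + 1) * (D x) ^ (2 * i)) ∈ P := hDP _ h
  have h2 : D x * D (x ^ (m + 1) * (D x) ^ (2 * i)) ∈ P := P.mul_mem_left _ h1
  have h3 : ((2 * i : ℕ) : R) * ((x ^ (m + 1) * (D x) ^ (2 * i)) * D (D x)) ∈ P :=
    P.mul_mem_left _ (P.mul_mem_right _ h)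
  have h4 := P.sub_mem h2 h3
  have key : D x * D (x ^ (m + 1) * (D x) ^ (2 * i))
      - ((2 * i : ℕ) : R) * ((x ^ (m + 1) * (D x) ^ (2 * i)) * D (D x))
      = ((m + 1 : ℕ) : R) * (x ^ m * (D x) ^ (2 * i + 2)) := by
    rw [Derivation.leibniz, Derivation.leibniz_pow, Derivation.leibniz_pow]
    simp only [smul_eq_mul, nsmul_eq_mul, Nat.add_sub_cancel]
    cases i with
    | zero => push_cast; ring
    | succ p =>
      rw [show 2 * (p + 1) - 1 = 2 * p + 1 by omega]
      push_cast; ring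
  rw [key] at h4
  exact cancel_nat_cast k (Nat.succ_ne_zero m) h4

lemma radical_poisson {B : PoissonBracket k R} {P : Ideal R} (hP : IsPoissonIdeal B P) :
    IsPoissonIdeal B P.radical := by
  intro a x hx
  obtain ⟨n, hn⟩ := Ideal.mem_radical_iff.mp hx
  suffices h : ∀ j, j ≤ n → x ^ (n - j) * (B.bracket a x) ^ (2 * j) ∈ P by
    have h0 := h n le_rfl
    rw [Nat.sub_self, pow_zero, one_mul] at h0
    exact Ideal.mem_radical_iff.mpr ⟨2 * n, h0⟩
  intro j hj
  induction j with
  | zero => simpa using hn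
  | succ i ih =>
    have hi := ih (Nat.le_of_succ_le hj)
    rw [show n - i = (n - (i + 1)) + 1 by omega] at hi
    have := poisson_step hP a x i (n - (i + 1)) hi
    rwa [show 2 * (i + 1) = 2 * i + 2 by ring]

/-- A minimal prime over a radical Poisson ideal is a Poisson ideal. -/
lemma minimal_prime_poisson [IsNoetherianRing R] {B : PoissonBracket k R} {P : Ideal R}
    (hP : IsPoissonIdeal B P) (hr : P.radical = P) {Q : Ideal R}
    (hQ : Q ∈ P.minimalPrimes) : IsPoissonIdeal B Q := by
  classical
  have hfin : P.minimalPrimes.Finite := by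
    rw [Ideal.minimalPrimes_eq_comap]
    exact (minimalPrimes.finite_of_isNoetherianRing _).image _
  have hQprime : Q.IsPrime := hQ.1.1
  have hPQ : P ≤ Q := hQ.1.2
  -- choose, for each other minimal prime, an element of it not in Q
  have hfin' : (P.minimalPrimes \ {Q}).Finite := hfin.subset Set.diff_subset
  have hchoice : ∀ Q' ∈ hfin'.toFinset, ∃ z, z ∈ Q' ∧ z ∉ Q := by
    intro Q' hQ'
    rw [Set.Finite.mem_toFinset, Set.mem_diff, Set.mem_singleton_iff] at hQ'
    by_contra hcon
    push_neg at hcon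
    have hle : Q' ≤ Q := fun z hz => hcon z hz
    exact hQ'.2 (le_antisymm hle (hQ.2 hQ'.1.1 hle))
  choose f hf1 hf2 using hchoice
  set y : R := ∏ Q' ∈ hfin'.toFinset.attach, f Q' Q'.2 with hy
  have hyQ : y ∉ Q := by
    have : y ∈ Q.primeCompl := Submonoid.prod_mem _ (fun Q' _ => hf2 Q' Q'.2)
    exact this
  have hymem : ∀ Q' ∈ P.minimalPrimes, Q' ≠ Q → y ∈ Q' := by
    intro Q' hQ'mem hne
    have hQ'T : Q' ∈ hfin'.toFinset := by
      rw [Set.Finite.mem_toFinset]; exact ⟨hQ'mem, hne⟩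
    obtain ⟨c, hc⟩ := Finset.dvd_prod_of_mem (fun q : hfin'.toFinset => f q q.2)
      (Finset.mem_attach _ (⟨Q', hQ'T⟩ : hfin'.toFinset))
    rw [hy, hc]
    exact Ideal.mul_mem_right _ _ (hf1 _ _)
  intro a x hx
  have hxy : x * y ∈ P := by
    rw [← hr, ← Ideal.sInf_minimalPrimes]
    rw [Ideal.mem_sInf]
    intro Q' hQ'
    by_cases hne : Q' = Q
    · subst hne; exact Q'.mul_mem_right _ hx
    · exact Ideal.mul_mem_left _ _ (hymem Q' hQ' hne)
  have h1 : B.bracket a (x * y) ∈ Q := hPQ (hP a _ hxy)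
  rw [B.leibniz] at h1
  have h2 : y * (B.bracket a x * y + x * B.bracket a y) ∈ Q := Q.mul_mem_left y h1
  have h3 : (x * y) * B.bracket a y ∈ Q := hPQ (P.mul_mem_right _ hxy)
  have h4 := Q.sub_mem h2 h3
  rw [show y * (B.bracket a x * y + x * B.bracket a y) - (x * y) * B.bracket a y
      = B.bracket a x * (y * y) by ring] at h4
  rcases hQprime.mem_or_mem h4 with h | h
  · exact h
  · exact absurd (hQprime.mem_or_mem h |>.elim id id) hyQ

end CharZero

/-- every Poisson-prime ideal of a commutative noetherian Poisson algebra
over a characteristic-zero field is prime; consequently the Poisson-prime ideals coincide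
with the prime Poisson ideals. -/
theorem poissonPrime_iff_prime_poisson (k R : Type*) [Field k] [CharZero k] [CommRing R]
    [Algebra k R] [IsNoetherianRing R] (B : PoissonBracket k R) :
    (∀ P : Ideal R, IsPoissonPrime B P → P.IsPrime) ∧
    (∀ P : Ideal R, IsPoissonPrime B P ↔ (P.IsPrime ∧ IsPoissonIdeal B P)) := by
  classical
  have hprime : ∀ P : Ideal R, IsPoissonPrime B P → P.IsPrime := by
    intro P hP
    obtain ⟨hPt, hPi, hPp⟩ := hP
    -- P is radical
    have hpowle : ∀ (I : Ideal R), IsPoissonIdeal B I → ∀ n : ℕ, I ^ n ≤ P → I ≤ P := by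
      intro I hI n
      induction n with
      | zero =>
        intro h
        rw [pow_zero, Ideal.one_eq_top] at h
        exact absurd (top_le_iff.mp h) hPt
      | succ m ih =>
        intro h
        rw [pow_succ] at h
        rcases hPp _ _ (pow_poisson hI m) hI h with h' | h'
        · exact ih h'
        · exact h'
    have hr : P.radical = P := by
      obtain ⟨n, hn⟩ := Ideal.exists_radical_pow_le_of_fg P (IsNoetherian.noetherian _)
      exact le_antisymm (hpowle _ (radical_poisson hPi) n hn) Ideal.le_radical
    -- finitely many minimal primes
    have hfin : P.minimalPrimes.Finite := by
      rw [Ideal.minimalPrimes_eq_comap]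
      exact (minimalPrimes.finite_of_isNoetherianRing _).image _
    have hprodle : (∏ Q ∈ hfin.toFinset, Q) ≤ P := by
      have h1 : (∏ Q ∈ hfin.toFinset, Q) ≤ sInf P.minimalPrimes :=
        le_sInf fun Q hQ => le_trans Ideal.prod_le_inf (Finset.inf_le (hfin.mem_toFinset.mpr hQ))
      rwa [Ideal.sInf_minimalPrimes, hr] at h1
    -- some minimal prime is ≤ P
    have hex : ∃ Q ∈ hfin.toFinset, Q ≤ P := by
      by_contra hcon
      push_neg at hcon
      -- then the product gives contradiction via Poisson-primeness, by induction
      have main : ∀ F : Finset (Ideal R), (∀ Q ∈ F, IsPoissonIdeal B Q) →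
          (∏ Q ∈ F, Q) ≤ P → ∃ Q ∈ F, Q ≤ P := by
        intro F
        induction F using Finset.induction_on with
        | empty =>
          intro _ h
          rw [Finset.prod_empty, Ideal.one_eq_top] at h
          exact absurd (top_le_iff.mp h) hPt
        | @insert Q F hnotmem ih =>
          intro hpois h
          rw [Finset.prod_insert hnotmem] at h
          rcases hPp _ _ (hpois Q (Finset.mem_insert_self _ _))
              (prod_poisson F fun I hI => hpois I (Finset.mem_insert_of_mem hI)) h with h' | h'
          · exact ⟨Q, Finset.mem_insert_self _ _, h'⟩
          · obtain ⟨Q', hQ', hle⟩ := ih (fun I hI => hpois I (Finset.mem_insert_of_mem hI)) h'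
            exact ⟨Q', Finset.mem_insert_of_mem hQ', hle⟩
      obtain ⟨Q, hQF, hQle⟩ := main hfin.toFinset
        (fun Q hQ => minimal_prime_poisson hPi hr (hfin.mem_toFinset.mp hQ)) hprodle
      exact hcon Q hQF hQle
    obtain ⟨Q, hQF, hQle⟩ := hex
    have hQmem := hfin.mem_toFinset.mp hQF
    have : P = Q := le_antisymm hQmem.1.2 hQle
    rw [this]
    exact hQmem.1.1
  refine ⟨hprime, fun P => ⟨fun h => ⟨hprime P h, h.2.1⟩, ?_⟩⟩
  rintro ⟨h1, h2⟩
  exact ⟨h1.ne_top, h2, fun I J _ _ hIJ => h1.mul_le.mp hIJ⟩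
end

section
/- Let k be a field of characteristic zero and let R be a commutative noetherian k-algebra equipped with a Poisson bracket. Then the Poisson prime spectrum P.spec R is sauber: every nonempty irreducible closed subset F of P.spec R has exactly one generic point, i.e. there is a unique prime Poisson ideal Q ∈ F whose closure in P.spec R equals F. -/
/-- the Poisson prime spectrum of a commutative noetherian Poisson algebra
over a characteristic-zero field is sauber: every nonempty irreducible closed subset has
exactly one generic point. -/
theorem pSpec_sauber (k R : Type*) [Field k] [CharZero k] [CommRing R]
    [Algebra k R] [IsNoetherianRing R] (B : PoissonBracket k R)
    (F : Set {p : PrimeSpectrum R // IsPoissonIdeal B p.asIdeal})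
    (hF : IsClosed F) (hirr : IsIrreducible F) :
    ∃! Q : {p : PrimeSpectrum R // IsPoissonIdeal B p.asIdeal},
      Q ∈ F ∧ closure {Q} = F := by
  classical
  set f : {p : PrimeSpectrum R // IsPoissonIdeal B p.asIdeal} → PrimeSpectrum R :=
    Subtype.val with hf
  have hirr' : IsIrreducible (closure (f '' F)) :=
    (hirr.image f continuous_subtype_val.continuousOn).closure
  obtain ⟨P, hP⟩ := QuasiSober.sober hirr' isClosed_closure
  have hPmem : P ∈ closure (f '' F) := hP.mem
  -- the closed set in the ambient space cutting out F
  obtain ⟨C, hC, hCF⟩ := isClosed_induced_iff.mp hF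
  have himg : f '' F ⊆ C := by
    rintro p ⟨q, hq, rfl⟩
    rw [← hCF] at hq
    exact hq
  have hsub : closure (f '' F) ⊆ C := closure_minimal himg hC
  have hPI : P.asIdeal = PrimeSpectrum.vanishingIdeal (f '' F) := by
    rw [← PrimeSpectrum.vanishingIdeal_singleton P,
      ← PrimeSpectrum.vanishingIdeal_closure, hP,
      PrimeSpectrum.vanishingIdeal_closure]
  have hQpois : IsPoissonIdeal B P.asIdeal := by
    intro a x hx
    rw [hPI, PrimeSpectrum.mem_vanishingIdeal] at hx ⊢
    rintro p ⟨q, hq, rfl⟩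
    exact q.2 a x (hx _ ⟨q, hq, rfl⟩)
  have hmemiff : ∀ x : {p : PrimeSpectrum R // IsPoissonIdeal B p.asIdeal},
      x ∈ F ↔ f x ∈ closure (f '' F) := by
    intro x
    constructor
    · intro hx
      exact subset_closure ⟨x, hx, rfl⟩
    · intro hx
      rw [← hCF]
      exact hsub hx
  refine ⟨⟨P, hQpois⟩, ⟨(hmemiff _).mpr hPmem, ?_⟩, ?_⟩
  · ext x
    rw [closure_subtype, Set.image_singleton]
    show f x ∈ closure ({P} : Set (PrimeSpectrum R)) ↔ x ∈ F
    rw [hP]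
    exact (hmemiff x).symm
  · rintro Q' ⟨hQ'F, hcl⟩
    have hgen : IsGenericPoint (f Q') (closure (f '' F)) := by
      apply subset_antisymm
      · exact closure_minimal (Set.singleton_subset_iff.2 (subset_closure ⟨Q', hQ'F, rfl⟩))
          isClosed_closure
      · refine closure_minimal ?_ isClosed_closure
        rintro p ⟨q, hq, rfl⟩
        have hq' : q ∈ closure ({Q'} : Set _) := hcl ▸ hq
        rw [closure_subtype, Set.image_singleton] at hq'
        exact hq'
    exact Subtype.ext (hgen.eq hP)
end

section
/- Let k be a field of characteristic zero and let R be a commutative affine (finitely generated) k-algebra equipped with a Poisson bracket. Then the inclusion P.prim R → P.spec R is a quasi-homeomorphism: for every closed subset F of P.spec R, F equals the closure in P.spec R of F ∩ P.prim R. Equivalently, every prime Poisson ideal of R is an intersection of Poisson-primitive ideals. -/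
namespace PoissonBracket

variable {k R : Type*} [CommRing k] [CommRing R] [Algebra k R] (B : PoissonBracket k R)

lemma bracket_zero_right (a : R) : B.bracket a 0 = 0 := by
  have h := B.add_right a 0 0
  rw [add_zero] at h
  exact (left_eq_add.mp h)

lemma bracket_neg_right (a x : R) : B.bracket a (-x) = - B.bracket a x := by
  have h := B.add_right a x (-x)
  rw [add_neg_cancel, bracket_zero_right] at h
  exact (neg_eq_of_add_eq_zero_right h.symm).symm

lemma bracket_sub_right (a x y : R) : B.bracket a (x - y) = B.bracket a x - B.bracket a y := by
  rw [sub_eq_add_neg, B.add_right, bracket_neg_right, sub_eq_add_neg]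

/-- An iterated bracket word: the innermost letter comes first. -/
def pw (B : PoissonBracket k R) : List R → R → R
  | [], x => x
  | c :: t, x => pw B t (B.bracket c x)

@[simp] lemma pw_nil (x : R) : pw B [] x = x := rfl
@[simp] lemma pw_cons (c : R) (t : List R) (x : R) :
    pw B (c :: t) x = pw B t (B.bracket c x) := rfl

lemma pw_append (s t : List R) (x : R) : pw B (s ++ t) x = pw B t (pw B s x) := by
  induction s generalizing x with
  | nil => rfl
  | cons c s ih => simp [ih]

lemma pw_add (l : List R) (x y : R) : pw B l (x + y) = pw B l x + pw B l y := by
  induction l generalizing x y with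
  | nil => rfl
  | cons c t ih => simp [B.add_right, ih]

@[simp] lemma pw_zero (l : List R) : pw B l 0 = 0 := by
  induction l with
  | nil => rfl
  | cons c t ih => simp [bracket_zero_right, ih]

lemma pw_sub (l : List R) (x y : R) : pw B l (x - y) = pw B l x - pw B l y := by
  induction l generalizing x y with
  | nil => rfl
  | cons c t ih => simp [bracket_sub_right, ih]

lemma pw_smul (l : List R) (t : k) (x : R) : pw B l (t • x) = t • pw B l x := by
  induction l generalizing x with
  | nil => rfl
  | cons c s ih => simp [B.smul_right, ih]

lemma pw_sum {ι : Type*} (l : List R) (s : Finset ι) (g : ι → R) :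
    pw B l (∑ i ∈ s, g i) = ∑ i ∈ s, pw B l (g i) :=
  map_sum (AddMonoidHom.mk' (pw B l) (fun x y => B.pw_add l x y)) g s

lemma bracket_swap (c c' x : R) :
    B.bracket c (B.bracket c' x) - B.bracket c' (B.bracket c x)
      = B.bracket (B.bracket c c') x := by
  have hj := B.jacobi c c' x
  have h1 : B.bracket c' (B.bracket x c) = - B.bracket c' (B.bracket c x) := by
    rw [B.antisymm x c, bracket_neg_right]
  have h2 : B.bracket x (B.bracket c c') = - B.bracket (B.bracket c c') x := by
    rw [B.antisymm x (B.bracket c c')]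
  rw [h1, h2] at hj
  linear_combination hj

section Icore

variable (m : Ideal R)

lemma pw_mul_mem : ∀ (l : List R) (r x : R), (∀ l' : List R, pw B l' x ∈ m) →
    pw B l (r * x) ∈ m := by
  intro l
  induction l with
  | nil => intro r x hx; exact m.mul_mem_left r (hx [])
  | cons c t ih =>
      intro r x hx
      rw [pw_cons, B.leibniz c r x, pw_add]
      exact m.add_mem (ih _ x hx) (ih r (B.bracket c x) (fun l' => hx (c :: l')))

/-- The largest Poisson ideal inside `m`, concretely. -/
def Icore : Ideal R where
  carrier := {x | ∀ l : List R, pw B l x ∈ m}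
  add_mem' := fun hx hy l => by rw [pw_add]; exact m.add_mem (hx l) (hy l)
  zero_mem' := fun l => by simp
  smul_mem' := fun r x hx => by
    simp only [smul_eq_mul, Set.mem_setOf_eq] at *
    exact fun l => pw_mul_mem B m l r x hx

lemma mem_Icore {x : R} : x ∈ Icore B m ↔ ∀ l : List R, pw B l x ∈ m := Iff.rfl

lemma Icore_le : Icore B m ≤ m := fun x hx => hx []

lemma isPoissonIdeal_Icore : IsPoissonIdeal B (Icore B m) :=
  fun a x hx l => hx (a :: l)

lemma pw_mem_of_isPoissonIdeal {J : Ideal R} (hJ : IsPoissonIdeal B J) :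
    ∀ (l : List R) (x : R), x ∈ J → pw B l x ∈ J := by
  intro l
  induction l with
  | nil => exact fun x hx => hx
  | cons c t ih => exact fun x hx => ih _ (hJ c x hx)

lemma le_Icore {J : Ideal R} (hJ : IsPoissonIdeal B J) (hle : J ≤ m) : J ≤ Icore B m :=
  fun x hx l => hle (pw_mem_of_isPoissonIdeal B hJ l x hx)

lemma poissonCore_eq : poissonCore B m = Icore B m :=
  le_antisymm (sSup_le fun J hJ => le_Icore B m hJ.1 hJ.2)
    (le_sSup ⟨isPoissonIdeal_Icore B m, Icore_le B m⟩)

lemma poissonCore_le : poissonCore B m ≤ m := by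
  rw [poissonCore_eq]; exact Icore_le B m

lemma le_poissonCore {J : Ideal R} (hJ : IsPoissonIdeal B J) (hle : J ≤ m) :
    J ≤ poissonCore B m := le_sSup ⟨hJ, hle⟩

lemma isPoissonIdeal_poissonCore : IsPoissonIdeal B (poissonCore B m) := by
  rw [poissonCore_eq]; exact isPoissonIdeal_Icore B m

lemma pw_perm_sub_mem :
    ∀ {l₁ l₂ : List R}, l₁.Perm l₂ → ∀ x : R,
      (∀ l : List R, l.length < l₁.length → pw B l x ∈ m) →
      pw B l₁ x - pw B l₂ x ∈ m := by
  intro l₁ l₂ h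
  induction h with
  | nil => intro x _; simpa using m.zero_mem
  | cons c h ih =>
      intro x hx
      simp only [pw_cons]
      exact ih (B.bracket c x) fun l hl => hx (c :: l) (by simpa using Nat.succ_lt_succ hl)
  | swap c c' l =>
      intro x hx
      simp only [pw_cons]
      rw [← pw_sub, bracket_swap]
      exact hx (B.bracket c c' :: l) (by simp [Nat.lt_succ_iff])
  | trans h₁ h₂ ih₁ ih₂ =>
      intro x hx
      have h' := ih₂ x (by rw [← h₁.length_eq]; exact hx)
      have := m.add_mem (ih₁ x hx) h'
      simpa using this

section Combinatorics

lemma bracket_zero_left (x : R) : B.bracket 0 x = 0 := by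
  rw [B.antisymm, bracket_zero_right, neg_zero]

lemma bracket_sum_left {ι : Type*} (s : Finset ι) (g : ι → R) (x : R) :
    B.bracket (∑ i ∈ s, g i) x = ∑ i ∈ s, B.bracket (g i) x :=
  map_sum (AddMonoidHom.mk' (fun a => B.bracket a x) (fun a b => B.add_left a b x)) g s

lemma sum_consEquiv {ι M : Type*} [Fintype ι] [AddCommMonoid M] {n : ℕ}
    (F : (Fin (n+1) → ι) → M) :
    ∑ g : Fin (n+1) → ι, F g = ∑ i : ι, ∑ f : Fin n → ι, F (Fin.cons i f) := by
  have h0 : ∑ p : ι × (Fin n → ι), F (Fin.cons p.1 p.2) = ∑ g : Fin (n+1) → ι, F g :=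
    Fintype.sum_equiv (Fin.consEquiv fun _ => ι) _ F (fun p => rfl)
  rw [← h0, Fintype.sum_prod_type]

lemma pw_replicate_sum {ι : Type*} [Fintype ι] (y : ι → R) :
    ∀ (n : ℕ) (x : R), pw B (List.replicate n (∑ i, y i)) x
      = ∑ f : Fin n → ι, pw B (List.ofFn fun j => y (f j)) x := by
  intro n
  induction n with
  | zero =>
      intro x
      have h1 : ∀ f : Fin 0 → ι, pw B (List.ofFn fun j => y (f j)) x = x := fun f => by simp
      rw [Finset.sum_congr rfl fun f _ => h1 f, Finset.sum_const]
      simp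
  | succ n ih =>
      intro x
      rw [List.replicate_succ, pw_cons, bracket_sum_left, pw_sum, sum_consEquiv]
      refine Finset.sum_congr rfl fun i _ => ?_
      rw [ih (B.bracket (y i) x)]
      refine Finset.sum_congr rfl fun f _ => ?_
      conv_rhs => rw [List.ofFn_succ, pw_cons]
      simp

lemma pw_ofFn_smul : ∀ (n : ℕ) (s : Fin n → k) (c : Fin n → R) (x : R),
    pw B (List.ofFn fun j => s j • c j) x = (∏ j, s j) • pw B (List.ofFn c) x := by
  intro n
  induction n with
  | zero => intro s c x; simp
  | succ n ih =>
      intro s c x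
      rw [List.ofFn_succ, List.ofFn_succ, pw_cons, pw_cons, B.smul_left, pw_smul,
        ih (fun j => s j.succ) (fun j => c j.succ) (B.bracket (c 0) x),
        Fin.prod_univ_succ, smul_smul]

/-- select the sublist of `List.ofFn c` given by the boolean mask `g`. -/
def sel (B : PoissonBracket k R) : ∀ {n : ℕ}, (Fin n → R) → (Fin n → Bool) → List R
  | 0, _, _ => []
  | _+1, c, g =>
      (if g 0 then [c 0] else []) ++ sel B (fun j => c j.succ) (fun j => g j.succ)

lemma sel_cons_true {n : ℕ} (c : Fin (n+1) → R) (g : Fin (n+1) → Bool) (h : g 0 = true) :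
    sel B c g = c 0 :: sel B (fun j => c j.succ) (fun j => g j.succ) := by
  rw [sel, if_pos h]
  rfl

lemma sel_cons_false {n : ℕ} (c : Fin (n+1) → R) (g : Fin (n+1) → Bool) (h : g 0 = false) :
    sel B c g = sel B (fun j => c j.succ) (fun j => g j.succ) := by
  rw [sel, if_neg (by simp [h])]
  rfl

lemma pw_sel_split : ∀ {n : ℕ} (c : Fin n → R) (x y : R),
    pw B (List.ofFn c) (x * y)
      = ∑ g : Fin n → Bool, pw B (sel B c g) x * pw B (sel B c (fun j => !(g j))) y := by
  intro n
  induction n with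
  | zero =>
      intro c x y
      have h1 : ∀ g : Fin 0 → Bool,
          pw B (sel B c g) x * pw B (sel B c (fun j => !(g j))) y = x * y := fun g => by
        simp [sel]
      rw [Finset.sum_congr rfl fun g _ => h1 g, Finset.sum_const]
      simp
  | succ n ih =>
      intro c x y
      rw [sum_consEquiv (fun g : Fin (n+1) → Bool =>
        pw B (sel B c g) x * pw B (sel B c (fun j => !(g j))) y), Fintype.sum_bool]
      rw [List.ofFn_succ, pw_cons, B.leibniz, pw_add,
        ih (fun j => c j.succ) (B.bracket (c 0) x) y,
        ih (fun j => c j.succ) x (B.bracket (c 0) y)]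
      congr 1

/-- number of `true`s of a boolean mask. -/
def ct {n : ℕ} (g : Fin n → Bool) : ℕ := ∑ j, (if g j then 1 else 0)

lemma sel_const {n : ℕ} (z : R) (g : Fin n → Bool) :
    sel B (fun _ => z) g = List.replicate (ct g) z := by
  induction n with
  | zero => simp [sel, ct]
  | succ n ih =>
      have hct : ct g = (if g 0 then 1 else 0) + ct (fun j => g j.succ) := by
        simp only [ct, Fin.sum_univ_succ]
      rw [sel, ih (fun j => g j.succ), hct, List.replicate_add]
      congr 1
      by_cases h : g 0 = true <;> simp [h]

lemma ct_le {n : ℕ} (g : Fin n → Bool) : ct g ≤ n := by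
  calc ct g ≤ ∑ _j : Fin n, 1 := Finset.sum_le_sum (fun j _ => by split <;> omega)
  _ = n := by simp

lemma ct_not {n : ℕ} (g : Fin n → Bool) : ct (fun j => !(g j)) = n - ct g := by
  have h : ct g + ct (fun j => !(g j)) = n := by
    rw [ct, ct, ← Finset.sum_add_distrib]
    calc (∑ j : Fin n, ((if g j then 1 else 0) + if !(g j) then 1 else 0))
        = ∑ _j : Fin n, 1 := Finset.sum_congr rfl (fun j _ => by cases h : g j <;> simp [h])
      _ = n := by simp
  omega

lemma ct_eq_card_filter {n : ℕ} (g : Fin n → Bool) :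
    ct g = (Finset.univ.filter fun j => g j = true).card := by
  rw [Finset.card_filter, ct]

lemma sum_boolfun {M : Type*} [AddCommMonoid M] (n : ℕ) (h : ℕ → M) :
    ∑ g : Fin n → Bool, h (ct g) = ∑ i ∈ Finset.range (n+1), (n.choose i) • h i := by
  classical
  have hbij : Function.Bijective
      (fun g : Fin n → Bool => Finset.univ.filter fun j => g j = true) := by
    refine Function.bijective_iff_has_inverse.mpr
      ⟨fun A => fun j => decide (j ∈ A), fun g => ?_, fun A => ?_⟩
    · funext j; by_cases hj : g j <;> simp [hj]
    · ext j; simp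
  have h1 : ∑ g : Fin n → Bool, h (ct g) = ∑ A : Finset (Fin n), h A.card := by
    refine Fintype.sum_bijective _ hbij _ _ fun g => ?_
    rw [ct_eq_card_filter]
  rw [h1]
  have h2 : ∑ A : Finset (Fin n), h A.card
      = ∑ A ∈ (Finset.univ : Finset (Fin n)).powerset, h A.card := by
    rw [Finset.powerset_univ]
  rw [h2, Finset.sum_powerset_apply_card]
  simp

end Combinatorics

section Digits

open Finset

/-- Uniqueness of base-`b` digit expansions. -/
lemma digits_eq {b : ℕ} (hb : 0 < b) :
    ∀ (M : ℕ) (d e : ℕ → ℕ), (∀ v, d v < b) → (∀ v, e v < b) →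
      (∑ v ∈ Finset.range M, d v * b ^ v) = (∑ v ∈ Finset.range M, e v * b ^ v) →
      ∀ v < M, d v = e v := by
  intro M
  induction M with
  | zero => intro d e _ _ _ v hv; omega
  | succ M ih =>
      intro d e hd he hsum v hv
      have key : ∀ f : ℕ → ℕ, ∑ v ∈ Finset.range (M+1), f v * b ^ v
          = f 0 + b * ∑ v ∈ Finset.range M, f (v+1) * b ^ v := by
        intro f
        rw [Finset.sum_range_succ' (fun v => f v * b ^ v) M]
        have hterm : ∀ x : ℕ, f (x+1) * b ^ (x+1) = b * (f (x+1) * b ^ x) := fun x => by ring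
        rw [Finset.sum_congr rfl fun x _ => hterm x, ← Finset.mul_sum]
        ring
      rw [key d, key e] at hsum
      have h0 : d 0 = e 0 := by
        have h1 := congrArg (· % b) hsum
        simpa [Nat.add_mul_mod_self_left, Nat.mod_eq_of_lt (hd 0),
          Nat.mod_eq_of_lt (he 0)] using h1
      have h2 : (∑ v ∈ Finset.range M, d (v+1) * b ^ v)
          = ∑ v ∈ Finset.range M, e (v+1) * b ^ v := by
        rw [h0] at hsum
        have := Nat.add_left_cancel hsum
        exact Nat.eq_of_mul_eq_mul_left hb this
      rcases Nat.eq_zero_or_pos v with hv0 | hvpos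
      · rw [hv0]; exact h0
      · obtain ⟨w, rfl⟩ := Nat.exists_eq_add_of_le hvpos
        have := ih (fun v => d (v+1)) (fun v => e (v+1)) (fun v => hd _) (fun v => he _) h2
          w (by omega)
        simpa [Nat.add_comm] using this

/-- Grouping a sum of powers by fibers gives the digit expansion. -/
lemma sum_pow_eq_digits {L n b : ℕ} (f : Fin n → Fin L) :
    ∑ j, b ^ ((f j : ℕ))
      = ∑ v ∈ Finset.range L,
          ((Finset.univ.filter fun j => ((f j : ℕ) = v)).card) * b ^ v := by
  classical
  rw [← Finset.sum_fiberwise_of_maps_to (g := fun j => ((f j : ℕ)))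
    (fun j _ => Finset.mem_range.mpr (f j).isLt) (fun j => b ^ ((f j : ℕ)))]
  refine Finset.sum_congr rfl fun v _ => ?_
  have h1 : ∀ j ∈ Finset.univ.filter (fun j => ((f j : ℕ) = v)),
      b ^ ((f j : ℕ)) = b ^ v := fun j hj => by rw [(Finset.mem_filter.mp hj).2]
  rw [Finset.sum_congr rfl h1, Finset.sum_const, smul_eq_mul]

lemma ofFn_comp_perm {α : Type*} {n : ℕ} (g : Fin n → α) (σ : Fin n → Fin n)
    (hσ : Function.Bijective σ) : (List.ofFn (g ∘ σ)).Perm (List.ofFn g) := by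
  have h1 : ((List.finRange n).map σ).Perm (List.finRange n) := by
    have hnd : ((List.finRange n).map σ).Nodup :=
      (List.nodup_finRange n).map (fun _ _ h => hσ.1 h)
    have hsub2 : List.Subperm ((List.finRange n).map σ) (List.finRange n) :=
      List.subperm_of_subset hnd (fun i _ => List.mem_finRange i)
    exact hsub2.perm_of_length_le (by simp)
  have := h1.map g
  simpa [List.ofFn_eq_map, List.map_map] using this

/-- If `f` has the same fibers as an injective map `emb`, then `c ∘ f` is a permutation
of `c ∘ emb`. -/
lemma key_perm {α : Type*} {L n : ℕ} (c : Fin L → α) (emb : Fin n → Fin L)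
    (hemb : Function.Injective emb) (f : Fin n → Fin L)
    (hdig : ∀ x : Fin L, (Finset.univ.filter fun j => f j = x).card
      = (Finset.univ.filter fun j => emb j = x).card) :
    (List.ofFn (c ∘ f)).Perm (List.ofFn (c ∘ emb)) := by
  classical
  have hle : ∀ x : Fin L, (Finset.univ.filter fun j => f j = x).card ≤ 1 := by
    intro x
    rw [hdig x]
    refine Finset.card_le_one.mpr fun i hi i' hi' => ?_
    rw [Finset.mem_filter] at hi hi'
    exact hemb (hi.2.trans hi'.2.symm)
  have hex : ∀ j : Fin n, ∃ i : Fin n, emb i = f j := by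
    intro j
    have h1 : 0 < (Finset.univ.filter fun j' => f j' = f j).card :=
      Finset.card_pos.mpr ⟨j, Finset.mem_filter.mpr ⟨Finset.mem_univ j, rfl⟩⟩
    rw [hdig (f j)] at h1
    obtain ⟨i, hi⟩ := Finset.card_pos.mp h1
    exact ⟨i, (Finset.mem_filter.mp hi).2⟩
  choose σ hσ using hex
  have hσinj : Function.Injective σ := by
    intro j j' h
    have : f j = f j' := by rw [← hσ j, ← hσ j', h]
    have hj : j ∈ Finset.univ.filter fun j'' => f j'' = f j' :=
      Finset.mem_filter.mpr ⟨Finset.mem_univ _, this⟩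
    have hj' : j' ∈ Finset.univ.filter fun j'' => f j'' = f j' :=
      Finset.mem_filter.mpr ⟨Finset.mem_univ _, rfl⟩
    exact Finset.card_le_one.mp (hle (f j')) j hj j' hj'
  have hσbij : Function.Bijective σ := (Finite.injective_iff_bijective).mp hσinj
  have hcf : c ∘ f = (c ∘ emb) ∘ σ := by
    funext j
    simp [Function.comp, hσ j]
  rw [hcf]
  exact ofFn_comp_perm (c ∘ emb) σ hσbij

end Digits


end Icore
end PoissonBracket

namespace PoissonBracket

section Prime

open Polynomial

variable {k R : Type*} [Field k] [CharZero k] [CommRing R] [Algebra k R]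

/-- For a word `ofFn (c ∘ emb)` of minimal length `n` moving `x` out of `m`, there is a
nonzero polynomial over `R ⧸ m` whose value at `t` is the class of the iterated bracket of
`x` by the generic element `∑ i, t ^ ((L+1) ^ i) • c i`, applied `n` times. -/
lemma poly_exists (B : PoissonBracket k R) (m : Ideal R) [hm : m.IsPrime]
    {L : ℕ} (c : Fin L → R) (x : R) {n : ℕ} (emb : Fin n → Fin L)
    (hembInj : Function.Injective emb)
    (hword : pw B (List.ofFn (c ∘ emb)) x ∉ m)
    (hmin : ∀ l : List R, l.length < n → pw B l x ∈ m) :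
    ∃ P : Polynomial (R ⧸ m), P ≠ 0 ∧ ∀ t : k,
      Polynomial.eval (algebraMap k (R ⧸ m) t) P
        = Ideal.Quotient.mk m
            (pw B (List.replicate n (∑ i : Fin L, t ^ ((L+1) ^ (i : ℕ)) • c i)) x) := by
  classical
  have hnL : n ≤ L := by
    have := Fintype.card_le_of_injective emb hembInj
    simpa using this
  set b0 : ℕ := L + 1 with hb0
  set π : R →+* (R ⧸ m) := Ideal.Quotient.mk m with hπ
  set Nf : (Fin n → Fin L) → ℕ := fun f => ∑ j, b0 ^ ((f j : ℕ)) with hNf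
  set P : Polynomial (R ⧸ m) :=
    ∑ f : Fin n → Fin L, Polynomial.monomial (Nf f) (π (pw B (List.ofFn (c ∘ f)) x))
    with hP
  have hfibereq : ∀ f : Fin n → Fin L, Nf f = Nf emb →
      ∀ y : Fin L, (Finset.univ.filter fun j => f j = y).card
        = (Finset.univ.filter fun j => emb j = y).card := by
    intro f hf y
    have hd := digits_eq (b := b0) (by omega) L
      (fun v => (Finset.univ.filter fun j => ((f j : ℕ) = v)).card)
      (fun v => (Finset.univ.filter fun j => ((emb j : ℕ) = v)).card)
      (fun v => by
        show (Finset.univ.filter fun j => ((f j : ℕ) = v)).card < b0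
        have h1 : (Finset.univ.filter fun j => ((f j : ℕ) = v)).card ≤ n := by
          simpa using Finset.card_filter_le Finset.univ fun j => ((f j : ℕ) = v)
        omega)
      (fun v => by
        show (Finset.univ.filter fun j => ((emb j : ℕ) = v)).card < b0
        have h1 : (Finset.univ.filter fun j => ((emb j : ℕ) = v)).card ≤ n := by
          simpa using Finset.card_filter_le Finset.univ fun j => ((emb j : ℕ) = v)
        omega)
      (by rw [← sum_pow_eq_digits f, ← sum_pow_eq_digits emb]; exact hf)
    have e1 : (Finset.univ.filter fun j => f j = y)
        = (Finset.univ.filter fun j => ((f j : ℕ) = ((y : ℕ)))) := by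
      apply Finset.filter_congr; intro j _; simp [Fin.ext_iff]
    have e2 : (Finset.univ.filter fun j => emb j = y)
        = (Finset.univ.filter fun j => ((emb j : ℕ) = ((y : ℕ)))) := by
      apply Finset.filter_congr; intro j _; simp [Fin.ext_iff]
    have hd2 : (Finset.univ.filter fun j => ((f j : ℕ) = ((y : ℕ)))).card
        = (Finset.univ.filter fun j => ((emb j : ℕ) = ((y : ℕ)))).card :=
      hd (y : ℕ) y.isLt
    rw [e1, e2, hd2]
  have hval : ∀ f : Fin n → Fin L, Nf f = Nf emb →
      π (pw B (List.ofFn (c ∘ f)) x) = π (pw B (List.ofFn (c ∘ emb)) x) := by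
    intro f hf
    have hperm := key_perm c emb hembInj f (hfibereq f hf)
    have hsub := pw_perm_sub_mem B m hperm x (fun l hl => hmin l (by simpa using hl))
    rw [hπ]
    exact Ideal.Quotient.eq.mpr hsub
  have hcoeff : P.coeff (Nf emb) ≠ 0 := by
    rw [hP, Polynomial.finset_sum_coeff]
    have h1 : ∀ f : Fin n → Fin L,
        (Polynomial.monomial (Nf f) (π (pw B (List.ofFn (c ∘ f)) x))).coeff (Nf emb)
          = if Nf f = Nf emb then π (pw B (List.ofFn (c ∘ f)) x) else 0 := fun f =>
      Polynomial.coeff_monomial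
    rw [Finset.sum_congr rfl fun f _ => h1 f, ← Finset.sum_filter,
      Finset.sum_congr rfl fun f hf => hval f (Finset.mem_filter.mp hf).2,
      Finset.sum_const]
    have hcard : 0 < (Finset.univ.filter fun f : Fin n → Fin L => Nf f = Nf emb).card :=
      Finset.card_pos.mpr ⟨emb, Finset.mem_filter.mpr ⟨Finset.mem_univ _, rfl⟩⟩
    have hne : π (pw B (List.ofFn (c ∘ emb)) x) ≠ 0 := by
      rw [hπ, Ne, Ideal.Quotient.eq_zero_iff_mem]
      exact hword
    intro h0
    rw [nsmul_eq_mul] at h0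
    rcases mul_eq_zero.mp h0 with h | h
    · have : ((Finset.univ.filter fun f : Fin n → Fin L => Nf f = Nf emb).card : k) ≠ 0 :=
        Nat.cast_ne_zero.mpr hcard.ne'
      apply this
      apply (algebraMap k (R ⧸ m)).injective
      rw [map_natCast, map_zero]
      exact h
    · exact hne h
  refine ⟨P, fun h0 => hcoeff (by rw [h0, Polynomial.coeff_zero]), ?_⟩
  intro t
  rw [hP, Polynomial.eval_finset_sum]
  have hrhs : pw B (List.replicate n (∑ i : Fin L, t ^ ((L+1) ^ (i : ℕ)) • c i)) x
      = ∑ f : Fin n → Fin L,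
          (t ^ (Nf f)) • pw B (List.ofFn (c ∘ f)) x := by
    rw [pw_replicate_sum B (fun i : Fin L => t ^ ((L+1) ^ (i : ℕ)) • c i) n x]
    refine Finset.sum_congr rfl fun f _ => ?_
    rw [show (List.ofFn fun j => (fun i : Fin L => t ^ ((L+1) ^ (i : ℕ)) • c i) (f j))
        = List.ofFn fun j => (t ^ ((L+1) ^ ((f j : ℕ)))) • ((c ∘ f) j) from rfl]
    rw [pw_ofFn_smul B n (fun j => t ^ ((L+1) ^ ((f j : ℕ)))) (c ∘ f) x]
    rw [Finset.prod_pow_eq_pow_sum]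
  rw [hrhs, map_sum]
  refine Finset.sum_congr rfl fun f _ => ?_
  rw [Polynomial.eval_monomial, Algebra.smul_def, map_mul]
  have halg : π ((algebraMap k R) (t ^ Nf f)) = (algebraMap k (R ⧸ m)) t ^ Nf f := by
    rw [hπ, ← Ideal.Quotient.algebraMap_eq, ← IsScalarTower.algebraMap_apply, map_pow]
  rw [halg, mul_comm]


theorem Icore_isPrime (B : PoissonBracket k R) (m : Ideal R) [hm : m.IsPrime] :
    (Icore B m).IsPrime := by
  classical
  constructor
  · -- not the unit ideal
    intro htop
    have h1 : (1 : R) ∈ Icore B m := htop ▸ Submodule.mem_top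
    exact hm.ne_top (Ideal.eq_top_of_isUnit_mem m (h1 []) isUnit_one)
  · intro a b hab
    by_contra hcon
    push_neg at hcon
    obtain ⟨ha, hb⟩ := hcon
    -- minimal-length words moving a (resp. b) out of m
    have ha' : ∃ n : ℕ, ∃ l : List R, l.length = n ∧ pw B l a ∉ m := by
      simp only [mem_Icore, not_forall] at ha
      obtain ⟨l, hl⟩ := ha
      exact ⟨l.length, l, rfl, hl⟩
    have hb' : ∃ n : ℕ, ∃ l : List R, l.length = n ∧ pw B l b ∉ m := by
      simp only [mem_Icore, not_forall] at hb
      obtain ⟨l, hl⟩ := hb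
      exact ⟨l.length, l, rfl, hl⟩
    obtain ⟨u, hulen, hu⟩ := Nat.find_spec ha'
    obtain ⟨v, hvlen, hv⟩ := Nat.find_spec hb'
    have min_a : ∀ l : List R, l.length < u.length → pw B l a ∈ m := by
      intro l hl
      by_contra h
      exact Nat.find_min ha' (by omega) ⟨l, rfl, h⟩
    have min_b : ∀ l : List R, l.length < v.length → pw B l b ∈ m := by
      intro l hl
      by_contra h
      exact Nat.find_min hb' (by omega) ⟨l, rfl, h⟩
    clear hulen hvlen
    set L : ℕ := u.length + v.length with hL
    set c : Fin L → R := fun i => (u ++ v).getD (i : ℕ) 0 with hc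
    -- the two blocks of letters
    have hcu : List.ofFn (c ∘ Fin.castAdd v.length) = u := by
      have h1 : (c ∘ Fin.castAdd v.length)
          = fun i : Fin u.length => u[(i : ℕ)] := by
        funext i
        show (u ++ v).getD ((Fin.castAdd v.length i : Fin L) : ℕ) 0 = _
        rw [Fin.coe_castAdd, List.getD_append u v 0 i i.isLt, List.getD_eq_getElem]
      rw [h1, List.ofFn_getElem]
    have hcv : List.ofFn (c ∘ Fin.natAdd u.length) = v := by
      have h1 : (c ∘ Fin.natAdd u.length)
          = fun i : Fin v.length => v[(i : ℕ)] := by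
        funext i
        show (u ++ v).getD ((Fin.natAdd u.length i : Fin L) : ℕ) 0 = _
        rw [Fin.coe_natAdd, List.getD_append_right u v 0 (u.length + (i : ℕ)) (by omega),
          Nat.add_sub_cancel_left, List.getD_eq_getElem]
      rw [h1, List.ofFn_getElem]
    -- the two polynomials
    have hcastInj : Function.Injective
        (fun i : Fin u.length => Fin.castAdd v.length i) := by
      intro i j h
      exact Fin.ext (by simpa using congrArg Fin.val h)
    have hnatInj : Function.Injective
        (fun i : Fin v.length => Fin.natAdd u.length i) := by
      intro i j h
      have h2 := congrArg Fin.val h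
      simp only [Fin.coe_natAdd] at h2
      exact Fin.ext (by omega)
    obtain ⟨PA, hPA0, hPAeval⟩ := poly_exists B m c a
      (fun i : Fin u.length => Fin.castAdd v.length i) hcastInj
      (by rw [show (c ∘ fun i : Fin u.length => Fin.castAdd v.length i)
          = c ∘ Fin.castAdd v.length from rfl, hcu]; exact hu) min_a
    obtain ⟨PB, hPB0, hPBeval⟩ := poly_exists B m c b
      (fun i : Fin v.length => Fin.natAdd u.length i) hnatInj
      (by rw [show (c ∘ fun i : Fin v.length => Fin.natAdd u.length i)
          = c ∘ Fin.natAdd u.length from rfl, hcv]; exact hv) min_b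
    -- choose a good scalar t
    have hroots := Polynomial.finite_setOf_isRoot (mul_ne_zero hPA0 hPB0)
    have hinj : Function.Injective (algebraMap k (R ⧸ m)) :=
      (algebraMap k (R ⧸ m)).injective
    have hex : ∃ t : k, ¬ (PA * PB).IsRoot (algebraMap k (R ⧸ m) t) := by
      by_contra hall
      push_neg at hall
      have hsubset : (Set.univ : Set k) ⊆
          (fun t => algebraMap k (R ⧸ m) t) ⁻¹' {s | (PA * PB).IsRoot s} :=
        fun t _ => hall t
      have hfin : (Set.univ : Set k).Finite :=
        Set.Finite.subset (Set.Finite.preimage hinj.injOn hroots) hsubset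
      exact Set.infinite_univ hfin
    obtain ⟨t, ht⟩ := hex
    set z : R := ∑ i : Fin L, t ^ ((L + 1) ^ (i : ℕ)) • c i with hz
    have hA : pw B (List.replicate u.length z) a ∉ m := by
      intro hmem
      apply ht
      have hA0 : Polynomial.eval (algebraMap k (R ⧸ m) t) PA = 0 := by
        rw [hPAeval t]
        exact Ideal.Quotient.eq_zero_iff_mem.mpr hmem
      show Polynomial.eval _ (PA * PB) = 0
      rw [Polynomial.eval_mul, hA0, zero_mul]
    have hB : pw B (List.replicate v.length z) b ∉ m := by
      intro hmem
      apply ht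
      have hB0 : Polynomial.eval (algebraMap k (R ⧸ m) t) PB = 0 := by
        rw [hPBeval t]
        exact Ideal.Quotient.eq_zero_iff_mem.mpr hmem
      show Polynomial.eval _ (PA * PB) = 0
      rw [Polynomial.eval_mul, hB0, mul_zero]
    -- the binomial-style expansion of the full word applied to a * b
    have hkey : pw B (List.replicate L z) (a * b) ∈ m := hab (List.replicate L z)
    rw [← List.ofFn_const L z, pw_sel_split B (fun _ : Fin L => z) a b] at hkey
    have hterm : ∀ g : Fin L → Bool,
        pw B (sel B (fun _ => z) g) a * pw B (sel B (fun _ => z) (fun j => !(g j))) b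
          = pw B (List.replicate (ct g) z) a * pw B (List.replicate (L - ct g) z) b := by
      intro g
      rw [sel_const, sel_const, ct_not]
    rw [Finset.sum_congr rfl fun g _ => hterm g,
      sum_boolfun L (fun i => pw B (List.replicate i z) a
        * pw B (List.replicate (L - i) z) b)] at hkey
    -- all terms except i = u.length lie in m
    have hrest : ∑ i ∈ (Finset.range (L+1)).erase u.length,
        L.choose i • (pw B (List.replicate i z) a * pw B (List.replicate (L - i) z) b)
          ∈ m := by
      refine Submodule.sum_mem m fun i hi => ?_
      rw [Finset.mem_erase, Finset.mem_range] at hi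
      rcases lt_or_gt_of_ne hi.1 with hlt | hgt
      · exact nsmul_mem (Ideal.mul_mem_right _ m
          (min_a _ (by rw [List.length_replicate]; exact hlt))) _
      · refine nsmul_mem (Ideal.mul_mem_left _ _
          (min_b _ (by rw [List.length_replicate]; omega))) _
    have hmain : L.choose u.length •
        (pw B (List.replicate u.length z) a * pw B (List.replicate (L - u.length) z) b)
          ∈ m := by
      have hsplit := Finset.add_sum_erase (Finset.range (L+1))
        (fun i => L.choose i • (pw B (List.replicate i z) a
          * pw B (List.replicate (L - i) z) b))
        (a := u.length) (Finset.mem_range.mpr (show u.length < L + 1 by omega))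
      have h2 : L.choose u.length •
          (pw B (List.replicate u.length z) a * pw B (List.replicate (L - u.length) z) b)
          = (∑ i ∈ Finset.range (L+1), L.choose i • (pw B (List.replicate i z) a
              * pw B (List.replicate (L - i) z) b))
            - ∑ i ∈ (Finset.range (L+1)).erase u.length,
                L.choose i • (pw B (List.replicate i z) a
                  * pw B (List.replicate (L - i) z) b) := by
        rw [← hsplit]
        ring
      rw [h2]
      exact Submodule.sub_mem m hkey hrest
    -- conclude in the quotient field of fractions style: R/m is a domain
    have hLq : L - u.length = v.length := by omega
    rw [hLq] at hmain
    have hπ0 : (Ideal.Quotient.mk m) ((L.choose u.length : R)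
        * (pw B (List.replicate u.length z) a * pw B (List.replicate v.length z) b)) = 0 := by
      rw [← nsmul_eq_mul]
      exact Ideal.Quotient.eq_zero_iff_mem.mpr hmain
    rw [map_mul, map_mul] at hπ0
    have hchoose : (Ideal.Quotient.mk m) ((L.choose u.length : R)) ≠ 0 := by
      rw [map_natCast, ← map_natCast (algebraMap k (R ⧸ m))]
      intro h0
      have h1 : ((L.choose u.length : k)) = 0 := hinj (by rw [h0, map_zero])
      exact Nat.cast_ne_zero.mpr (Nat.choose_pos (by omega)).ne' h1
    rcases mul_eq_zero.mp hπ0 with h | h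
    · exact hchoose h
    rcases mul_eq_zero.mp h with h' | h'
    · exact hA (Ideal.Quotient.eq_zero_iff_mem.mp h')
    · exact hB (Ideal.Quotient.eq_zero_iff_mem.mp h')

end Prime

end PoissonBracket


/-- for a commutative affine Poisson algebra over a characteristic-zero field,
the inclusion of the Poisson-primitive spectrum into the Poisson prime spectrum is a
quasi-homeomorphism; equivalently, every prime Poisson ideal is an intersection of
Poisson-primitive ideals. -/
theorem pPrim_quasiHomeomorphism (k R : Type*) [Field k] [CharZero k] [CommRing R]
    [Algebra k R] [Algebra.FiniteType k R] (B : PoissonBracket k R) :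
    (∀ F : Set {p : PrimeSpectrum R // IsPoissonIdeal B p.asIdeal}, IsClosed F →
      closure (F ∩ {p | IsPoissonPrimitive B p.1.asIdeal}) = F) ∧
    (∀ Q : Ideal R, Q.IsPrime → IsPoissonIdeal B Q →
      Q = sInf {I : Ideal R | IsPoissonPrimitive B I ∧ Q ≤ I}) := by
  classical
  haveI : IsJacobsonRing R := isJacobsonRing_of_finiteType (A := k)
  -- the algebraic statement
  have key2 : ∀ Q : Ideal R, Q.IsPrime → IsPoissonIdeal B Q →
      Q = sInf {I : Ideal R | IsPoissonPrimitive B I ∧ Q ≤ I} := by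
    intro Q hQ hQP
    refine le_antisymm (le_sInf fun I hI => hI.2) ?_
    have hjac : Q.jacobson = Q := by
      rw [← Ideal.radical_eq_jacobson, hQ.radical]
    have h3 : sInf {I : Ideal R | IsPoissonPrimitive B I ∧ Q ≤ I} ≤ Q.jacobson := by
      rw [Ideal.jacobson]
      refine le_sInf fun J hJ => ?_
      exact le_trans
        (sInf_le ⟨⟨J, hJ.2, rfl⟩, PoissonBracket.le_poissonCore B J hQP hJ.1⟩)
        (PoissonBracket.poissonCore_le B J)
    exact h3.trans (le_of_eq hjac)
  refine ⟨?_, key2⟩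
  intro F hF
  refine subset_antisymm (closure_minimal Set.inter_subset_left hF) ?_
  intro p hpF
  rw [mem_closure_iff]
  intro O hO hpO
  obtain ⟨U, hU, rfl⟩ := isOpen_induced_iff.mp hO
  obtain ⟨C, hC, rfl⟩ := isClosed_induced_iff.mp hF
  obtain ⟨s0, rfl⟩ := (PrimeSpectrum.isClosed_iff_zeroLocus _).mp hC
  obtain ⟨V, ⟨f, hfV⟩, hpV, hVU⟩ :=
    PrimeSpectrum.isTopologicalBasis_basic_opens.exists_subset_of_mem_open hpO hU
  have hfp : f ∉ p.1.asIdeal := by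
    rw [← hfV] at hpV
    simpa using hpV
  have hs0Q : s0 ⊆ (p.1.asIdeal : Set R) := (PrimeSpectrum.mem_zeroLocus _ _).mp hpF
  have hjac : p.1.asIdeal.jacobson = p.1.asIdeal := by
    rw [← Ideal.radical_eq_jacobson, p.1.isPrime.radical]
  have hM : ∃ M : Ideal R, (p.1.asIdeal ≤ M ∧ M.IsMaximal) ∧ f ∉ M := by
    by_contra hall
    push_neg at hall
    have hf : f ∈ p.1.asIdeal.jacobson := by
      rw [Ideal.jacobson, Submodule.mem_sInf]
      exact fun J hJ => hall J hJ
    rw [hjac] at hf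
    exact hfp hf
  obtain ⟨M, ⟨hQM, hMmax⟩, hfM⟩ := hM
  haveI : M.IsPrime := hMmax.isPrime
  have hPPprime : (poissonCore B M).IsPrime := by
    rw [PoissonBracket.poissonCore_eq]
    exact PoissonBracket.Icore_isPrime B M
  refine ⟨⟨⟨poissonCore B M, hPPprime⟩,
    PoissonBracket.isPoissonIdeal_poissonCore B M⟩, ?_, ?_, ?_⟩
  · -- in the open set U
    show (⟨poissonCore B M, hPPprime⟩ : PrimeSpectrum R) ∈ U
    refine hVU ?_
    rw [← hfV]
    simpa using fun hf => hfM (PoissonBracket.poissonCore_le B M hf)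
  · -- in the zero locus
    show (⟨poissonCore B M, hPPprime⟩ : PrimeSpectrum R) ∈ PrimeSpectrum.zeroLocus s0
    exact (PrimeSpectrum.mem_zeroLocus _ _).mpr
      (le_trans hs0Q (PoissonBracket.le_poissonCore B M p.2 hQM))
  · -- Poisson primitive
    exact ⟨M, hMmax, rfl⟩
end

section
/- Let X' and Y' be topological spaces that are noetherian and sauber (every nonempty irreducible closed subset has exactly one generic point). Let X ⊆ X' and Y ⊆ Y' be subspaces such that the inclusions are quasi-homeomorphisms, i.e. for every closed F ⊆ X' the closure of F ∩ X equals F, and for every closed G ⊆ Y' the closure of G ∩ Y equals G. Then every continuous map φ : X → Y extends uniquely to a continuous map φ' : X' → Y' (meaning φ'(x) = φ(x) for all x ∈ X). Moreover, if φ is a homeomorphism, then φ' is a homeomorphism. -/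
open Set Topology

/-- Sober-style uniqueness of generic points gives T0-like identification. -/
lemma SQH.gen_unique {Y' : Type*} [TopologicalSpace Y']
    (hsY : ∀ G : Set Y', IsClosed G → IsIrreducible G → ∃! y, y ∈ G ∧ closure {y} = G)
    {a b : Y'} (h : closure ({a} : Set Y') = closure {b}) : a = b := by
  obtain ⟨y, _, hy⟩ := hsY (closure {b}) isClosed_closure isIrreducible_singleton.closure
  have ha : a = y := hy a ⟨h ▸ subset_closure (mem_singleton a), h⟩
  have hb : b = y := hy b ⟨subset_closure (mem_singleton b), rfl⟩
  rw [ha, hb]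

/-- Two continuous maps agreeing on a quasi-homeomorphic dense subspace coincide. -/
lemma SQH.ext_unique {X' Y' : Type*} [TopologicalSpace X'] [TopologicalSpace Y']
    (hsY : ∀ G : Set Y', IsClosed G → IsIrreducible G → ∃! y, y ∈ G ∧ closure {y} = G)
    (X : Set X') (hqX : ∀ F : Set X', IsClosed F → closure (F ∩ X) = F)
    {f g : X' → Y'} (hf : Continuous f) (hg : Continuous g)
    (h : ∀ x : X, f x = g x) : f = g := by
  have main : ∀ (f g : X' → Y'), Continuous f → Continuous g → (∀ x : X, f x = g x) →
      ∀ x' : X', ∀ G : Set Y', IsClosed G → f x' ∈ G → g x' ∈ G := by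
    intro f g hf hg h x' G hG hx'
    have hclosed : IsClosed (f ⁻¹' G) := hG.preimage hf
    have hsub : f ⁻¹' G ∩ X ⊆ g ⁻¹' G := by
      rintro z ⟨hz1, hz2⟩
      have := h ⟨z, hz2⟩
      simpa [← this] using hz1
    have : x' ∈ closure (f ⁻¹' G ∩ X) := by rw [hqX _ hclosed]; exact hx'
    exact closure_minimal hsub (hG.preimage hg) this
  funext x'
  apply SQH.gen_unique hsY
  apply Set.Subset.antisymm
  · exact closure_minimal (singleton_subset_iff.mpr
      (main g f hg hf (fun x => (h x).symm) x' _ isClosed_closure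
        (subset_closure (mem_singleton _)))) isClosed_closure
  · exact closure_minimal (singleton_subset_iff.mpr
      (main f g hf hg h x' _ isClosed_closure (subset_closure (mem_singleton _)))) isClosed_closure

lemma SQH.preirr {X' : Type*} [TopologicalSpace X'] {X C : Set X'}
    (hC : IsPreirreducible (C ∩ X)) :
    IsPreirreducible ((Subtype.val ⁻¹' C : Set X)) := by
  rintro u v hu hv ⟨p, hpC, hpu⟩ ⟨q, hqC, hqv⟩
  obtain ⟨U, hU, hUe⟩ := isOpen_induced_iff.mp hu
  obtain ⟨V, hV, hVe⟩ := isOpen_induced_iff.mp hv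
  subst hUe; subst hVe
  obtain ⟨z, ⟨hzC, hzX⟩, hzU, hzV⟩ :=
    hC U V hU hV ⟨p, ⟨hpC, p.2⟩, hpu⟩ ⟨q, ⟨hqC, q.2⟩, hqv⟩
  exact ⟨⟨z, hzX⟩, hzC, hzU, hzV⟩

/-- The key existence lemma: a continuous map from a quasi-homeomorphically embedded
subspace to a subspace of a sober space extends to a continuous map of ambient spaces. -/
lemma SQH.key {X' Y' : Type*} [TopologicalSpace X'] [TopologicalSpace Y']
    (hsY : ∀ G : Set Y', IsClosed G → IsIrreducible G → ∃! y, y ∈ G ∧ closure {y} = G)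
    (X : Set X') (Y : Set Y')
    (hqX : ∀ F : Set X', IsClosed F → closure (F ∩ X) = F)
    (φ : X → Y) (hφ : Continuous φ) :
    ∃ φ' : X' → Y', Continuous φ' ∧ ∀ x : X, φ' x = (φ x : Y') := by
  classical
  set h : X → Y' := fun p => (φ p : Y') with hh
  have hhc : Continuous h := continuous_subtype_val.comp hφ
  set D : X' → Set Y' := fun x' => closure (h '' (Subtype.val ⁻¹' closure {x'})) with hD
  have hDirr : ∀ x', IsIrreducible (D x') := by
    intro x'
    have hCX : closure (closure {x'} ∩ X) = closure {x'} := hqX _ isClosed_closure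
    have hne : (closure {x'} ∩ X).Nonempty := by
      rw [← closure_nonempty_iff, hCX]
      exact ⟨x', subset_closure (mem_singleton x')⟩
    have hirr : IsIrreducible (closure {x'} ∩ X) := by
      rw [← isIrreducible_iff_closure, hCX]
      exact isIrreducible_singleton.closure
    have hTne : ((Subtype.val ⁻¹' closure {x'} : Set X)).Nonempty := by
      obtain ⟨z, hzC, hzX⟩ := hne
      exact ⟨⟨z, hzX⟩, hzC⟩
    have hTpre : IsPreirreducible ((Subtype.val ⁻¹' closure {x'} : Set X)) :=
      SQH.preirr hirr.isPreirreducible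
    have : IsIrreducible (h '' (Subtype.val ⁻¹' closure {x'})) :=
      ⟨hTne.image h, hTpre.image h hhc.continuousOn⟩
    exact this.closure
  have H := fun x' => hsY (D x') isClosed_closure (hDirr x')
  choose φ' hspec using H
  have hpre : ∀ G : Set Y', IsClosed G →
      φ' ⁻¹' G = closure (Subtype.val '' (h ⁻¹' G)) := by
    intro G hG
    apply Set.Subset.antisymm
    · intro x' hx'
      have hDG : D x' ⊆ G := by
        rw [← (hspec x').1.2]
        exact closure_minimal (singleton_subset_iff.mpr hx') hG
      have hCX : closure {x'} ∩ X ⊆ Subtype.val '' (h ⁻¹' G) := by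
        rintro z ⟨hzC, hzX⟩
        exact ⟨⟨z, hzX⟩, hDG (subset_closure ⟨⟨z, hzX⟩, hzC, rfl⟩), rfl⟩
      have hx'mem : x' ∈ closure (closure {x'} ∩ X) := by
        rw [hqX _ isClosed_closure]
        exact subset_closure (mem_singleton x')
      exact closure_mono hCX hx'mem
    · intro x' hx'
      obtain ⟨K, hK, hKe⟩ := isClosed_induced_iff.mp (hG.preimage hhc)
      have hA_sub_K : Subtype.val '' (h ⁻¹' G) ⊆ K := by
        rintro _ ⟨p, hp, rfl⟩
        rw [← hKe] at hp
        exact hp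
      have hCsub : closure {x'} ⊆ closure (Subtype.val '' (h ⁻¹' G)) :=
        closure_minimal (singleton_subset_iff.mpr hx') isClosed_closure
      have hS : h '' (Subtype.val ⁻¹' closure {x'}) ⊆ G := by
        rintro _ ⟨p, hp, rfl⟩
        have hpK : (p : X') ∈ K := closure_minimal hA_sub_K hK (hCsub hp)
        have : p ∈ h ⁻¹' G := by rw [← hKe]; exact hpK
        exact this
      exact closure_minimal hS hG (hspec x').1.1
  refine ⟨φ', ?_, ?_⟩
  · rw [continuous_iff_isClosed]
    intro G hG
    rw [hpre G hG]
    exact isClosed_closure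
  · intro x
    have hgen : closure {(φ x : Y')} = D (x : X') := by
      apply Set.Subset.antisymm
      · apply closure_minimal _ isClosed_closure
        rw [singleton_subset_iff]
        exact subset_closure ⟨x, subset_closure (mem_singleton _), rfl⟩
      · apply closure_minimal _ isClosed_closure
        rintro _ ⟨p, hp, rfl⟩
        have hp' : p ∈ closure ({x} : Set X) := by
          rw [closure_subtype, Set.image_singleton]
          exact hp
        have : h p ∈ closure (h '' {x}) :=
          (image_closure_subset_closure_image hhc) (mem_image_of_mem h hp')
        rwa [Set.image_singleton] at this
    exact ((hspec (x : X')).2 _ ⟨hgen ▸ subset_closure (mem_singleton _), hgen⟩).symm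

/-- a continuous map between subspaces whose inclusions are
quasi-homeomorphisms into sauber noetherian spaces extends uniquely to a continuous map
between the ambient spaces; moreover, a homeomorphism extends to a homeomorphism. -/
theorem extend_continuous_of_quasiHomeomorphism (X' Y' : Type*)
    [TopologicalSpace X'] [TopologicalSpace Y']
    [TopologicalSpace.NoetherianSpace X'] [TopologicalSpace.NoetherianSpace Y']
    (hsX : ∀ F : Set X', IsClosed F → IsIrreducible F → ∃! x, x ∈ F ∧ closure {x} = F)
    (hsY : ∀ G : Set Y', IsClosed G → IsIrreducible G → ∃! y, y ∈ G ∧ closure {y} = G)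
    (X : Set X') (Y : Set Y')
    (hqX : ∀ F : Set X', IsClosed F → closure (F ∩ X) = F)
    (hqY : ∀ G : Set Y', IsClosed G → closure (G ∩ Y) = G)
    (φ : X → Y) (hφ : Continuous φ) :
    ∃ φ' : X' → Y', Continuous φ' ∧ (∀ x : X, φ' x = (φ x : Y')) ∧
      (∀ ψ : X' → Y', Continuous ψ → (∀ x : X, ψ x = (φ x : Y')) → ψ = φ') ∧
      (IsHomeomorph φ → IsHomeomorph φ') := by
  obtain ⟨φ', hcont, hext⟩ := SQH.key hsY X Y hqX φ hφ
  refine ⟨φ', hcont, hext, ?_, ?_⟩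
  · intro ψ hψ hψext
    exact SQH.ext_unique hsY X hqX hψ hcont (fun x => (hψext x).trans (hext x).symm)
  · intro hom
    obtain ⟨e, he⟩ := isHomeomorph_iff_exists_homeomorph.mp hom
    obtain ⟨ψ', hψcont, hψext⟩ := SQH.key hsX Y X hqY e.symm e.symm.continuous
    have h1 : ψ' ∘ φ' = id := by
      apply SQH.ext_unique hsX X hqX (hψcont.comp hcont) continuous_id
      intro x
      have : φ' x = (φ x : Y') := hext x
      simp only [Function.comp_apply, this, id_eq]
      have h2 : ψ' ((φ x : Y')) = ((e.symm (φ x) : X) : X') := hψext (φ x)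
      rw [h2, ← he, Homeomorph.symm_apply_apply]
    have h2 : φ' ∘ ψ' = id := by
      apply SQH.ext_unique hsY Y hqY (hcont.comp hψcont) continuous_id
      intro y
      have : ψ' y = ((e.symm y : X) : X') := hψext y
      simp only [Function.comp_apply, this, id_eq]
      have h3 : φ' ((e.symm y : X) : X') = (φ (e.symm y) : Y') := hext (e.symm y)
      rw [h3, ← he, Homeomorph.apply_symm_apply]
    exact (Homeomorph.mk ⟨φ', ψ', fun a => congrFun h1 a, fun b => congrFun h2 b⟩
      hcont hψcont).isHomeomorph
end

section
/- Let k be an algebraically closed field of characteristic zero and let R be a commutative affine (finitely generated) k-algebra equipped with a Poisson bracket. Let P be a Poisson-primitive ideal of R, and assume that the singleton {P} is a locally closed subset of P.spec R. Then P equals the intersection of all maximal ideals m of R whose Poisson core P(m) equals P. -/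
namespace PBaux

set_option linter.unusedSectionVars false

variable {k R : Type*} [Field k] [CharZero k] [CommRing R] [Algebra k R]

lemma bracket_zero (B : PoissonBracket k R) (a : R) : B.bracket a 0 = 0 := by
  have h := B.smul_right (0 : k) a 0
  simpa using h

lemma bracket_one (B : PoissonBracket k R) (a : R) : B.bracket a 1 = 0 := by
  have h := B.leibniz a 1 1
  rw [mul_one, mul_one, one_mul] at h
  exact (add_eq_left).mp h.symm

lemma cancel_natCast (B : PoissonBracket k R) {I : Ideal R} {n : ℕ} (hn : 0 < n) {y : R}
    (h : (n : R) * y ∈ I) : y ∈ I := by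
  have hu : IsUnit ((n : ℕ) : R) := by
    have h1 : algebraMap k R ((n : ℕ) : k) = ((n : ℕ) : R) := map_natCast _ n
    rw [← h1]
    exact IsUnit.map (algebraMap k R) (isUnit_iff_ne_zero.mpr (by exact_mod_cast hn.ne'))
  obtain ⟨u, hu⟩ := hu
  have : y = ↑u⁻¹ * ((n : R) * y) := by rw [← mul_assoc, ← hu, Units.inv_mul, one_mul]
  rw [this]
  exact I.mul_mem_left _ h

lemma bracket_pow (B : PoissonBracket k R) (a z : R) (m : ℕ) :
    B.bracket a (z ^ (m + 1)) = ((m + 1 : ℕ) : R) * (z ^ m * B.bracket a z) := by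
  induction m with
  | zero => simp
  | succ m ih =>
    have h : z ^ (m + 2) = z * z ^ (m + 1) := by ring
    rw [h, B.leibniz, ih]
    push_cast
    ring

lemma mul_bracket_pow (B : PoissonBracket k R) (a z : R) (m : ℕ) :
    z * B.bracket a (z ^ m) = ((m : ℕ) : R) * (z ^ m * B.bracket a z) := by
  cases m with
  | zero => simp [bracket_one]
  | succ m =>
    rw [bracket_pow]
    push_cast
    ring

lemma isPoissonIdeal_radical (B : PoissonBracket k R) {I : Ideal R}
    (hI : IsPoissonIdeal B I) : IsPoissonIdeal B I.radical := by
  intro a x hx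
  obtain ⟨n, hn⟩ := hx
  set d : R → R := B.bracket a with hd
  have key : ∀ j : ℕ, j ≤ n → x ^ (n - j) * d x ^ (2 * j) ∈ I := by
    intro j hj
    induction j with
    | zero => simpa using hn
    | succ j ih =>
      have hj' : j ≤ n := Nat.le_of_succ_le hj
      have h1 := ih hj'
      set r : ℕ := n - (j + 1) with hr
      have hm : n - j = r + 1 := by omega
      rw [hm] at h1
      have h2 : d (x ^ (r + 1) * d x ^ (2 * j)) ∈ I := hI a _ h1
      have e1 : d (x ^ (r + 1) * d x ^ (2 * j))
          = d (x ^ (r + 1)) * d x ^ (2 * j) + x ^ (r + 1) * d (d x ^ (2 * j)) :=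
        B.leibniz a _ _
      have e2 : d (x ^ (r + 1)) = ((r + 1 : ℕ) : R) * (x ^ r * d x) := bracket_pow B a x r
      have e3 : d x * d (d x ^ (2 * j)) = ((2 * j : ℕ) : R) * (d x ^ (2 * j) * d (d x)) :=
        mul_bracket_pow B a (d x) (2 * j)
      have h3 : ((r + 1 : ℕ) : R) * (x ^ r * d x ^ (2 * (j + 1))) ∈ I := by
        have hA : d x * d (x ^ (r + 1) * d x ^ (2 * j)) ∈ I := I.mul_mem_left _ h2
        have hB : ((2 * j : ℕ) : R) * d (d x) * (x ^ (r + 1) * d x ^ (2 * j)) ∈ I :=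
          I.mul_mem_left _ h1
        have heq : ((r + 1 : ℕ) : R) * (x ^ r * d x ^ (2 * (j + 1)))
            = d x * d (x ^ (r + 1) * d x ^ (2 * j))
              - ((2 * j : ℕ) : R) * d (d x) * (x ^ (r + 1) * d x ^ (2 * j)) := by
          rw [e1, e2]
          have h4 : 2 * (j + 1) = 2 * j + 2 := by ring
          rw [h4]
          push_cast at e3 ⊢
          linear_combination (-(x ^ (r + 1))) * e3
        rw [heq]
        exact Ideal.sub_mem I hA hB
      exact cancel_natCast B (Nat.succ_pos r) h3
  refine ⟨2 * n, ?_⟩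
  have := key n le_rfl
  simpa using this

lemma minimalPrimes_finite [IsNoetherianRing R] (I : Ideal R) : I.minimalPrimes.Finite := by
  rw [Ideal.minimalPrimes_eq_comap]
  exact (minimalPrimes.finite_of_isNoetherianRing (R ⧸ I)).image _

lemma isPoissonIdeal_of_minimalPrime [IsNoetherianRing R] (B : PoissonBracket k R)
    {I Q : Ideal R} (hI : IsPoissonIdeal B I) (hQ : Q ∈ I.minimalPrimes) :
    IsPoissonIdeal B Q := by
  have hQp : Q.IsPrime := hQ.1.1
  have hrad : IsPoissonIdeal B I.radical := isPoissonIdeal_radical B hI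
  -- find y outside Q but inside all other minimal primes
  have hy : ∃ y : R, y ∉ Q ∧ ∀ Q' ∈ I.minimalPrimes, Q' ≠ Q → y ∈ Q' := by
    by_contra hcon
    push_neg at hcon
    have hle : ∀ y : R, (∀ Q' ∈ I.minimalPrimes, Q' ≠ Q → y ∈ Q') → y ∈ Q := by
      intro y hy'
      by_contra hyQ
      obtain ⟨Q', hQ', hne, hmem⟩ := hcon y hyQ
      exact hmem (hy' Q' hQ' hne)
    -- so inf of the other minimal primes is ≤ Q
    have hfin : (I.minimalPrimes \ {Q}).Finite := (minimalPrimes_finite I).diff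
    have hinf : hfin.toFinset.inf id ≤ Q := by
      intro y hy'
      refine hle y ?_
      intro Q' hQ'' hne
      have : Q' ∈ hfin.toFinset := by
        simp [Set.Finite.mem_toFinset, hQ'', hne]
      exact (Finset.inf_le this : hfin.toFinset.inf id ≤ Q') hy'
    obtain ⟨Q', hQ', hle'⟩ := (Ideal.IsPrime.inf_le' hQp).mp hinf
    simp only [Set.Finite.mem_toFinset, Set.mem_diff, Set.mem_singleton_iff] at hQ'
    have hQQ' : Q ≤ Q' := hQ.2 hQ'.1.1 hle'
    exact hQ'.2 (le_antisymm hle' hQQ')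
  obtain ⟨y, hyQ, hy'⟩ := hy
  intro a x hx
  have hxy : x * y ∈ I.radical := by
    rw [← Ideal.sInf_minimalPrimes, Ideal.mem_sInf]
    intro Q' hQ'
    by_cases h : Q' = Q
    · subst h; exact Q'.mul_mem_right _ hx
    · exact Ideal.mul_mem_left _ _ (hy' Q' hQ' h)
  have hrQ : I.radical ≤ Q := by
    rw [← Ideal.sInf_minimalPrimes]
    exact sInf_le hQ
  have hbr : B.bracket a (x * y) ∈ Q := hrQ (hrad a _ hxy)
  rw [B.leibniz] at hbr
  have h1 : x * B.bracket a y ∈ Q := Q.mul_mem_right _ hx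
  have h2 : B.bracket a x * y ∈ Q := by
    have := Q.sub_mem hbr h1
    simpa using this
  rcases hQp.mem_or_mem h2 with h | h
  · exact h
  · exact absurd h hyQ


lemma poissonCore_le (B : PoissonBracket k R) (J : Ideal R) : poissonCore B J ≤ J :=
  sSup_le fun _ hI => hI.2

lemma le_poissonCore (B : PoissonBracket k R) {I J : Ideal R} (hI : IsPoissonIdeal B I)
    (h : I ≤ J) : I ≤ poissonCore B J :=
  le_sSup ⟨hI, h⟩

lemma isPoissonIdeal_poissonCore (B : PoissonBracket k R) (J : Ideal R) :
    IsPoissonIdeal B (poissonCore B J) := by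
  have hne : {I : Ideal R | IsPoissonIdeal B I ∧ I ≤ J}.Nonempty :=
    ⟨⊥, fun a x hx => by simp_all [bracket_zero], bot_le⟩
  have hdir : DirectedOn (· ≤ ·) {I : Ideal R | IsPoissonIdeal B I ∧ I ≤ J} := by
    intro I1 h1 I2 h2
    refine ⟨I1 ⊔ I2, ⟨?_, sup_le h1.2 h2.2⟩, le_sup_left, le_sup_right⟩
    intro a x hx
    rw [Submodule.mem_sup] at hx ⊢
    obtain ⟨y, hy, z, hz, rfl⟩ := hx
    exact ⟨B.bracket a y, h1.1 a y hy, B.bracket a z, h2.1 a z hz, (B.add_right a y z).symm⟩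
  intro a x hx
  rw [poissonCore] at hx ⊢
  rw [Submodule.mem_sSup_of_directed hne hdir] at hx ⊢
  obtain ⟨I, hI, hxI⟩ := hx
  exact ⟨I, hI, hI.1 a x hxI⟩

lemma poissonCore_isPrime [IsNoetherianRing R] (B : PoissonBracket k R) {m : Ideal R}
    (hm : m.IsPrime) : (poissonCore B m).IsPrime := by
  have hC : IsPoissonIdeal B (poissonCore B m) := isPoissonIdeal_poissonCore B m
  have hCm : poissonCore B m ≤ m := poissonCore_le B m
  obtain ⟨Q, hQ, hQm⟩ := Ideal.exists_minimalPrimes_le hCm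
  have hQPoisson : IsPoissonIdeal B Q := isPoissonIdeal_of_minimalPrime B hC hQ
  have h1 : Q ≤ poissonCore B m := le_poissonCore B hQPoisson hQm
  have h2 : poissonCore B m ≤ Q := hQ.1.2
  have : poissonCore B m = Q := le_antisymm h2 h1
  rw [this]
  exact hQ.1.1

end PBaux

/-- over an algebraically closed field of characteristic zero, if a
Poisson-primitive ideal `P` of an affine Poisson algebra is a locally closed point of the
Poisson prime spectrum, then `P` is the intersection of the maximal ideals whose Poisson
core is `P`. -/
theorem locallyClosed_poissonPrimitive_eq_sInf (k R : Type*) [Field k] [CharZero k]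
    [IsAlgClosed k] [CommRing R] [Algebra k R] [Algebra.FiniteType k R]
    (B : PoissonBracket k R)
    (p : {q : PrimeSpectrum R // IsPoissonIdeal B q.asIdeal})
    (hp : IsPoissonPrimitive B p.1.asIdeal)
    (hloc : IsLocallyClosed ({p} : Set {q : PrimeSpectrum R // IsPoissonIdeal B q.asIdeal})) :
    p.1.asIdeal = sInf {m : Ideal R | m.IsMaximal ∧ poissonCore B m = p.1.asIdeal} := by
  have hNoeth : IsNoetherianRing R := Algebra.FiniteType.isNoetherianRing k R
  have hJac : IsJacobsonRing R := isJacobsonRing_of_finiteType (A := k) (B := R)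
  set P := p.1.asIdeal with hPdef
  have hPprime : P.IsPrime := p.1.2
  obtain ⟨U, Z, hU, hZ, hUZ⟩ := hloc
  have hpmem : p ∈ U ∩ Z := by rw [← hUZ]; exact Set.mem_singleton _
  obtain ⟨U', hU', hU'eq⟩ := isOpen_induced_iff.mp hU
  obtain ⟨Z', hZ', hZ'eq⟩ := isClosed_induced_iff.mp hZ
  obtain ⟨s, hs⟩ := (PrimeSpectrum.isOpen_iff U').mp hU'
  obtain ⟨T, hT⟩ := (PrimeSpectrum.isClosed_iff_zeroLocus Z').mp hZ'
  have hpU' : p.1 ∈ U' := by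
    have := hpmem.1
    rw [← hU'eq] at this
    exact this
  have hpZ' : p.1 ∈ Z' := by
    have := hpmem.2
    rw [← hZ'eq] at this
    exact this
  have hnotZL : p.1 ∉ PrimeSpectrum.zeroLocus s := by
    rw [← hs]
    simpa using hpU'
  rw [PrimeSpectrum.mem_zeroLocus] at hnotZL
  obtain ⟨f, hfs, hfP⟩ := Set.not_subset.mp hnotZL
  have hTP : T ⊆ (P : Set R) := by
    rw [hT, PrimeSpectrum.mem_zeroLocus] at hpZ'
    exact hpZ'
  have key : ∀ m : Ideal R, m.IsMaximal → P ≤ m → f ∉ m → poissonCore B m = P := by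
    intro m hm hPm hfm
    have hCp : (poissonCore B m).IsPrime := PBaux.poissonCore_isPrime B hm.isPrime
    have hPC : P ≤ poissonCore B m := PBaux.le_poissonCore B p.2 hPm
    have hfC : f ∉ poissonCore B m := fun h => hfm (PBaux.poissonCore_le B m h)
    set q : {q : PrimeSpectrum R // IsPoissonIdeal B q.asIdeal} :=
      ⟨⟨poissonCore B m, hCp⟩, PBaux.isPoissonIdeal_poissonCore B m⟩ with hqdef
    have hqU : q ∈ U := by
      rw [← hU'eq]
      show q.1 ∈ U'
      rw [← compl_compl U', hs]
      simp only [Set.mem_compl_iff]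
      rw [PrimeSpectrum.mem_zeroLocus]
      intro hsub
      exact hfC (hsub hfs)
    have hqZ : q ∈ Z := by
      rw [← hZ'eq]
      show q.1 ∈ Z'
      rw [hT, PrimeSpectrum.mem_zeroLocus]
      intro t ht
      exact hPC (hTP ht)
    have hqp : q = p := by
      have : q ∈ ({p} : Set _) := by rw [hUZ]; exact ⟨hqU, hqZ⟩
      exact this
    exact congrArg (fun t => t.1.asIdeal) hqp
  apply le_antisymm
  · refine le_sInf ?_
    rintro m ⟨hm, hcore⟩
    rw [← hcore]
    exact PBaux.poissonCore_le B m
  · intro x hx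
    rw [Ideal.mem_sInf] at hx
    have hxf : x * f ∈ P.jacobson := by
      rw [Ideal.jacobson, Ideal.mem_sInf]
      rintro J ⟨hPJ, hJmax⟩
      by_cases hf : f ∈ J
      · exact J.mul_mem_left x hf
      · exact J.mul_mem_right f (hx ⟨hJmax, key J hJmax hPJ hf⟩)
    rw [← Ideal.radical_eq_jacobson, hPprime.radical] at hxf
    rcases hPprime.mem_or_mem hxf with h | h
    · exact h
    · exact absurd h hfP
end

section
/- Let k be an algebraically closed field of characteristic zero and let R be a commutative affine (finitely generated) k-algebra equipped with a Poisson bracket. Assume that for every Poisson-primitive ideal P of R the singleton {P} is a locally closed subset of P.spec R. Then the map from the maximal ideal space maxspec R (with its Zariski topology) to P.prim R sending each maximal ideal m to its Poisson core P(m) is a continuous surjection, and the topology on P.prim R coincides with the quotient topology induced by this map; that is, a subset X ⊆ P.prim R is closed if and only if {m ∈ maxspec R : P(m) ∈ X} is closed in maxspec R. -/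
namespace PPrimAux

variable {k R : Type*} [Field k] [CharZero k] [CommRing R] [Algebra k R]
variable (B : PoissonBracket k R)

lemma bz (a : R) : B.bracket a 0 = 0 := by
  have h := B.add_right a 0 0
  rw [add_zero] at h
  exact add_eq_left.mp h.symm

lemma bracket_pow (a x : R) (n : ℕ) :
    B.bracket a (x ^ (n + 1)) = ((n + 1 : ℕ) : R) * (x ^ n * B.bracket a x) := by
  induction n with
  | zero => simp [pow_one]
  | succ n ih =>
    have hpow : x ^ (n + 2) = x * x ^ (n + 1) := by ring
    rw [hpow, B.leibniz, ih]
    push_cast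
    ring

lemma cancel_natCast (B : PoissonBracket k R) (I : Ideal R) {n : ℕ} (hn : n ≠ 0) {z : R}
    (h : (n : R) * z ∈ I) : z ∈ I := by
  have h1 : algebraMap k R ((n : k)⁻¹) * ((n : R) * z) ∈ I := I.mul_mem_left _ h
  have h2 : algebraMap k R ((n : k)⁻¹) * ((n : R) * z) = z := by
    rw [← mul_assoc, ← map_natCast (algebraMap k R) n, ← map_mul,
      inv_mul_cancel₀ (by exact_mod_cast hn : (n : k) ≠ 0), map_one, one_mul]
  rwa [h2] at h1

lemma radical_poisson {I : Ideal R} (hI : IsPoissonIdeal B I) :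
    IsPoissonIdeal B I.radical := by
  intro a x hx
  obtain ⟨n, hn⟩ := Ideal.mem_radical_iff.mp hx
  cases n with
  | zero =>
    have h1 : I = ⊤ := (Ideal.eq_top_iff_one I).mpr (by simpa using hn)
    rw [h1]
    exact Ideal.mem_radical_iff.mpr ⟨1, Submodule.mem_top⟩
  | succ m =>
    set u := B.bracket a x with hu
    have key : ∀ j : ℕ, j ≤ m → u ^ (2 * j + 1) * x ^ (m - j) ∈ I := by
      intro j
      induction j with
      | zero =>
        intro _
        have h0 : B.bracket a (x ^ (m + 1)) ∈ I := hI a _ hn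
        rw [bracket_pow] at h0
        have h1 : x ^ m * u ∈ I := cancel_natCast B I (Nat.succ_ne_zero m) h0
        have : u ^ (2 * 0 + 1) * x ^ (m - 0) = x ^ m * u := by
          simp [pow_one, mul_comm]
        rwa [this]
      | succ j ihj =>
        intro hj1
        have hj : j ≤ m := le_trans (Nat.le_succ j) hj1
        have hA : u ^ (2 * j + 1) * x ^ (m - j) ∈ I := ihj hj
        have hmj : m - j = (m - (j + 1)) + 1 := by omega
        rw [hmj] at hA
        have hdA : B.bracket a (u ^ (2 * j + 1) * x ^ ((m - (j + 1)) + 1)) ∈ I := hI a _ hA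
        have hcdef : True := trivial
        have exp1 : B.bracket a (u ^ (2 * j + 1) * x ^ ((m - (j + 1)) + 1)) =
            ((2 * j + 1 : ℕ) : R) * (u ^ (2 * j) * B.bracket a u) * x ^ ((m - (j + 1)) + 1)
              + u ^ (2 * j + 1) * ((((m - (j + 1)) + 1 : ℕ) : R) * (x ^ (m - (j + 1)) * u)) := by
          rw [B.leibniz, bracket_pow, bracket_pow]
        have h8 : (((m - (j + 1)) + 1 : ℕ) : R) * (u ^ (2 * (j + 1) + 1) * x ^ (m - (j + 1))) =
            u * B.bracket a (u ^ (2 * j + 1) * x ^ ((m - (j + 1)) + 1))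
              - ((2 * j + 1 : ℕ) : R) * B.bracket a u * (u ^ (2 * j + 1) * x ^ ((m - (j + 1)) + 1)) := by
          rw [exp1]
          push_cast
          ring
        have h9 : (((m - (j + 1)) + 1 : ℕ) : R) * (u ^ (2 * (j + 1) + 1) * x ^ (m - (j + 1))) ∈ I := by
          rw [h8]
          exact I.sub_mem (I.mul_mem_left u hdA) (I.mul_mem_left _ hA)
        have h10 : u ^ (2 * (j + 1) + 1) * x ^ (m - (j + 1)) ∈ I :=
          cancel_natCast B I (Nat.succ_ne_zero (m - (j + 1))) h9
        exact h10
    have last := key m le_rfl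
    refine Ideal.mem_radical_iff.mpr ⟨2 * m + 1, ?_⟩
    simpa using last

lemma minimal_poisson [IsNoetherianRing R] {C : Ideal R} (hC : IsPoissonIdeal B C)
    (hrad : C.radical = C) {p : Ideal R} (hp : p ∈ C.minimalPrimes) :
    IsPoissonIdeal B p := by
  have hpprime : p.IsPrime := hp.1.1
  have hfin : C.minimalPrimes.Finite := by
    rw [Ideal.minimalPrimes_eq_comap]
    exact (minimalPrimes.finite_of_isNoetherianRing (R ⧸ C)).image _
  set S : Set (Ideal R) := C.minimalPrimes \ {p} with hS
  have hSfin : S.Finite := hfin.subset Set.diff_subset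
  by_cases hle : sInf S ≤ p
  · exfalso
    have hle2 : hSfin.toFinset.inf id ≤ p := by
      rw [Finset.inf_id_eq_sInf, hSfin.coe_toFinset]
      exact hle
    obtain ⟨q, hqS, hqp⟩ := (hpprime.inf_le').mp hle2
    have hq : q ∈ S := hSfin.mem_toFinset.mp hqS
    have hpq : p ≤ q := hp.2 hq.1.1 hqp
    exact hq.2 (le_antisymm hqp hpq)
  · obtain ⟨y, hyS, hyp⟩ : ∃ y, y ∈ sInf S ∧ y ∉ p := by
      by_contra h
      push_neg at h
      exact hle fun y hy => h y hy
    intro a x hx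
    have hxy : x * y ∈ C := by
      rw [← hrad, ← Ideal.sInf_minimalPrimes]
      refine (Ideal.mem_sInf).mpr ?_
      intro q hq
      by_cases hqp : q = p
      · subst hqp; exact Ideal.mul_mem_right y q hx
      · exact Ideal.mul_mem_left q x ((Ideal.mem_sInf.mp hyS) ⟨hq, hqp⟩)
    have hbr : B.bracket a (x * y) ∈ p := hp.1.2 (hC a _ hxy)
    rw [B.leibniz] at hbr
    have h2 : x * B.bracket a y ∈ p := Ideal.mul_mem_right _ p hx
    have h3 : B.bracket a x * y ∈ p := by
      have := p.sub_mem hbr h2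
      simpa using this
    exact (hpprime.mem_or_mem h3).resolve_right hyp

/-- Iterated bracket along a list. -/
def Dl (w : List R) (x : R) : R := w.foldr B.bracket x

@[simp] lemma Dl_nil (x : R) : Dl B [] x = x := rfl

@[simp] lemma Dl_cons (a : R) (w : List R) (x : R) :
    Dl B (a :: w) x = B.bracket a (Dl B w x) := rfl

lemma Dl_zero (w : List R) : Dl B w 0 = 0 := by
  induction w with
  | nil => rfl
  | cons a w ih => simp [ih, bz]

lemma Dl_add (w : List R) (x y : R) : Dl B w (x + y) = Dl B w x + Dl B w y := by
  induction w with
  | nil => rfl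
  | cons a w ih => simp [ih, B.add_right]

lemma Dl_mem {K : Ideal R} (hK : IsPoissonIdeal B K) {x : R} (hx : x ∈ K)
    (w : List R) : Dl B w x ∈ K := by
  induction w with
  | nil => exact hx
  | cons a w ih => exact hK a _ ih

/-- The Poisson ideal generated by an element. -/
def Pg (x : R) : Ideal R := Ideal.span {y | ∃ w : List R, Dl B w x = y}

lemma self_mem_Pg (x : R) : x ∈ Pg B x := Ideal.subset_span ⟨[], rfl⟩

lemma Pg_le {K : Ideal R} (hK : IsPoissonIdeal B K) {x : R} (hx : x ∈ K) :
    Pg B x ≤ K := by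
  rw [Pg, Ideal.span_le]
  rintro y ⟨w, rfl⟩
  exact Dl_mem B hK hx w

lemma Pg_poisson (x : R) : IsPoissonIdeal B (Pg B x) := by
  intro a z hz
  induction hz using Submodule.span_induction with
  | mem y hy =>
    obtain ⟨w, rfl⟩ := hy
    exact Ideal.subset_span ⟨a :: w, rfl⟩
  | zero => rw [bz]; exact (Pg B x).zero_mem
  | add u v hu hv ihu ihv => rw [B.add_right]; exact add_mem ihu ihv
  | smul r z hz ih =>
    rw [smul_eq_mul, B.leibniz]
    exact add_mem (Ideal.mul_mem_left _ _ hz) (Ideal.mul_mem_left _ r ih)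

lemma Pg_le_Pg {z x : R} (hz : z ∈ Pg B x) : Pg B z ≤ Pg B x :=
  Pg_le B (Pg_poisson B x) hz

/-- The candidate Poisson core as an explicit ideal. -/
def coreAux (J : Ideal R) : Ideal R where
  carrier := {x | Pg B x ≤ J}
  zero_mem' := by
    show Pg B 0 ≤ J
    rw [Pg, Ideal.span_le]
    rintro y ⟨w, rfl⟩
    rw [Dl_zero]
    exact J.zero_mem
  add_mem' := by
    intro x y hx hy
    show Pg B (x + y) ≤ J
    rw [Pg, Ideal.span_le]
    rintro z ⟨w, rfl⟩
    rw [Dl_add]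
    exact J.add_mem (hx (Ideal.subset_span ⟨w, rfl⟩)) (hy (Ideal.subset_span ⟨w, rfl⟩))
  smul_mem' := by
    intro r x hx
    show Pg B (r • x) ≤ J
    rw [smul_eq_mul]
    exact le_trans (Pg_le_Pg B (Ideal.mul_mem_left _ r (self_mem_Pg B x))) hx

theorem core_eq (J : Ideal R) : poissonCore B J = coreAux B J := by
  apply le_antisymm
  · apply sSup_le
    rintro K ⟨hKp, hKJ⟩
    intro x hx
    show Pg B x ≤ J
    exact le_trans (Pg_le B hKp hx) hKJ
  · apply le_sSup
    constructor
    · intro a x hx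
      show Pg B (B.bracket a x) ≤ J
      exact le_trans (Pg_le_Pg B (Ideal.subset_span ⟨[a], rfl⟩)) hx
    · intro x hx
      exact hx (self_mem_Pg B x)

lemma core_le (J : Ideal R) : poissonCore B J ≤ J := by
  rw [core_eq]
  intro x hx
  exact hx (self_mem_Pg B x)

lemma core_poisson (J : Ideal R) : IsPoissonIdeal B (poissonCore B J) := by
  rw [core_eq]
  intro a x hx
  show Pg B (B.bracket a x) ≤ J
  exact le_trans (Pg_le_Pg B (Ideal.subset_span ⟨[a], rfl⟩)) hx

lemma le_core {K J : Ideal R} (hK : IsPoissonIdeal B K) (hKJ : K ≤ J) :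
    K ≤ poissonCore B J := le_sSup ⟨hK, hKJ⟩

lemma mem_core_iff {J : Ideal R} {x : R} :
    x ∈ poissonCore B J ↔ ∀ w : List R, Dl B w x ∈ J := by
  rw [core_eq]
  show Pg B x ≤ J ↔ _
  constructor
  · intro h w
    exact h (Ideal.subset_span ⟨w, rfl⟩)
  · intro h
    rw [Pg, Ideal.span_le]
    rintro y ⟨w, rfl⟩
    exact h w

theorem core_prime [IsNoetherianRing R] {J : Ideal R} (hJ : J.IsPrime) :
    (poissonCore B J).IsPrime := by
  haveI := hJ
  have hCp : IsPoissonIdeal B (poissonCore B J) := core_poisson B J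
  have hCrad : (poissonCore B J).radical = poissonCore B J := by
    refine le_antisymm ?_ Ideal.le_radical
    refine le_core B (radical_poisson B hCp) ?_
    calc (poissonCore B J).radical ≤ J.radical := Ideal.radical_mono (core_le B J)
    _ = J := hJ.radical
  obtain ⟨p, hpmem, hpJ⟩ := Ideal.exists_minimalPrimes_le (core_le B J)
  have hpPois : IsPoissonIdeal B p := minimal_poisson B hCp hCrad hpmem
  have hpC : p ≤ poissonCore B J := le_core B hpPois hpJ
  have hCeq : poissonCore B J = p := le_antisymm hpmem.1.2 hpC
  rw [hCeq]
  exact hpmem.1.1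

lemma jac_prime [IsJacobsonRing R] {Q : Ideal R} (hQ : Q.IsPrime) :
    Q.jacobson = Q := by
  rw [← Ideal.radical_eq_jacobson, hQ.radical]

lemma exists_max_avoid [IsJacobsonRing R] {Q : Ideal R} (hQ : Q.IsPrime) {g : R}
    (hg : g ∉ Q) : ∃ n : Ideal R, n.IsMaximal ∧ Q ≤ n ∧ g ∉ n := by
  by_contra h
  push_neg at h
  apply hg
  rw [← jac_prime hQ, Ideal.jacobson]
  exact Ideal.mem_sInf.mpr fun {n} hn => h n hn.2 hn.1

lemma closed_iff {pr : PrimeSpectrum R → Prop} (A : Set {q : PrimeSpectrum R // pr q}) :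
    IsClosed A ↔ ∃ s : Set R, A = {x : {q : PrimeSpectrum R // pr q} | s ⊆ x.1.asIdeal} := by
  rw [isClosed_induced_iff]
  constructor
  · rintro ⟨t, ht, rfl⟩
    obtain ⟨s, rfl⟩ := (PrimeSpectrum.isClosed_iff_zeroLocus _).mp ht
    refine ⟨s, ?_⟩
    ext x
    exact PrimeSpectrum.mem_zeroLocus _ _
  · rintro ⟨s, rfl⟩
    refine ⟨PrimeSpectrum.zeroLocus s, PrimeSpectrum.isClosed_zeroLocus s, ?_⟩
    ext x
    exact PrimeSpectrum.mem_zeroLocus _ _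

lemma exists_g
    (hloc : ∀ p : {q : PrimeSpectrum R // IsPoissonIdeal B q.asIdeal},
      IsPoissonPrimitive B p.1.asIdeal →
        IsLocallyClosed ({p} : Set {q : PrimeSpectrum R // IsPoissonIdeal B q.asIdeal}))
    {Q : Ideal R} (hQpr : Q.IsPrime) (hQpois : IsPoissonIdeal B Q)
    (hQprim : IsPoissonPrimitive B Q) :
    ∃ g, g ∉ Q ∧ ∀ q : Ideal R, q.IsPrime → IsPoissonIdeal B q → Q ≤ q → g ∉ q → q = Q := by
  set pt : {q : PrimeSpectrum R // IsPoissonIdeal B q.asIdeal} := ⟨⟨Q, hQpr⟩, hQpois⟩ with hpt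
  obtain ⟨U, Z, hU, hZ, hUZ⟩ := hloc pt hQprim
  have hmem : pt ∈ U ∩ Z := by rw [← hUZ]; exact Set.mem_singleton _
  obtain ⟨U₀, hU₀, hU₀eq⟩ := isOpen_induced_iff.mp hU
  obtain ⟨Z₀, hZ₀, hZ₀eq⟩ := isClosed_induced_iff.mp hZ
  obtain ⟨t, rfl⟩ := (PrimeSpectrum.isClosed_iff_zeroLocus _).mp hZ₀
  have hpt1 : pt.1 ∈ U₀ := by
    have := hmem.1
    rw [← hU₀eq] at this
    exact this
  obtain ⟨V, hVmem, hptV, hVsub⟩ :=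
    PrimeSpectrum.isTopologicalBasis_basic_opens.exists_subset_of_mem_open hpt1 hU₀
  obtain ⟨g, rfl⟩ := hVmem
  have htQ : t ⊆ Q := by
    have := hmem.2
    rw [← hZ₀eq] at this
    exact (PrimeSpectrum.mem_zeroLocus _ _).mp this
  refine ⟨g, ?_, ?_⟩
  · exact (PrimeSpectrum.mem_basicOpen g pt.1).mp hptV
  · intro q hqpr hqpois hQq hgq
    set qt : {q : PrimeSpectrum R // IsPoissonIdeal B q.asIdeal} := ⟨⟨q, hqpr⟩, hqpois⟩ with hqt
    have hqZ : qt ∈ Z := by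
      rw [← hZ₀eq]
      exact (PrimeSpectrum.mem_zeroLocus _ _).mpr (le_trans htQ hQq)
    have hqU : qt ∈ U := by
      rw [← hU₀eq]
      exact hVsub ((PrimeSpectrum.mem_basicOpen g qt.1).mpr hgq)
    have : qt ∈ ({pt} : Set _) := by rw [hUZ]; exact ⟨hqU, hqZ⟩
    have heq := Set.mem_singleton_iff.mp this
    exact congrArg (fun z => z.1.asIdeal) heq

end PPrimAux

open PPrimAux in
/-- over an algebraically closed field of characteristic zero, if every
Poisson-primitive ideal of an affine Poisson algebra is a locally closed point of the
Poisson prime spectrum, then the Poisson core map from the maximal spectrum to the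
Poisson-primitive spectrum is a continuous surjection and the topology on the
Poisson-primitive spectrum is the quotient topology it induces. -/
theorem pPrim_quotient_topology (k R : Type*) [Field k] [CharZero k]
    [IsAlgClosed k] [CommRing R] [Algebra k R] [Algebra.FiniteType k R]
    (B : PoissonBracket k R)
    (hloc : ∀ p : {q : PrimeSpectrum R // IsPoissonIdeal B q.asIdeal},
      IsPoissonPrimitive B p.1.asIdeal →
        IsLocallyClosed ({p} : Set {q : PrimeSpectrum R // IsPoissonIdeal B q.asIdeal})) :
    ∃ f : {m : PrimeSpectrum R // m.asIdeal.IsMaximal} →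
        {p : PrimeSpectrum R // IsPoissonPrimitive B p.asIdeal},
      (∀ m, (f m).1.asIdeal = poissonCore B m.1.asIdeal) ∧
      Continuous f ∧ Function.Surjective f ∧
      (∀ X : Set {p : PrimeSpectrum R // IsPoissonPrimitive B p.asIdeal},
        IsClosed X ↔ IsClosed (f ⁻¹' X)) := by
  classical
  haveI : IsNoetherianRing R := Algebra.FiniteType.isNoetherianRing k R
  haveI : IsJacobsonRing R := isJacobsonRing_of_finiteType (A := k) (B := R)
  set f : {m : PrimeSpectrum R // m.asIdeal.IsMaximal} →
      {p : PrimeSpectrum R // IsPoissonPrimitive B p.asIdeal} :=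
    fun m => ⟨⟨poissonCore B m.1.asIdeal, core_prime B m.2.isPrime⟩,
      ⟨m.1.asIdeal, m.2, rfl⟩⟩ with hfdef
  have key : ∀ X : Set {p : PrimeSpectrum R // IsPoissonPrimitive B p.asIdeal},
      IsClosed X ↔ IsClosed (f ⁻¹' X) := by
    intro X
    constructor
    · intro hX
      obtain ⟨s, rfl⟩ := (closed_iff _).mp hX
      refine (closed_iff _).mpr ⟨{y | ∃ x ∈ s, ∃ w : List R, Dl B w x = y}, ?_⟩
      ext m
      simp only [Set.mem_preimage, Set.mem_setOf_eq, hfdef]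
      constructor
      · rintro h y ⟨x, hxs, w, rfl⟩
        exact (mem_core_iff B).mp (h hxs) w
      · intro h x hxs
        exact (mem_core_iff B).mpr fun w => h ⟨x, hxs, w, rfl⟩
    · intro hpre
      obtain ⟨s, hs⟩ := (closed_iff _).mp hpre
      have hXeq : X = {p : {p : PrimeSpectrum R // IsPoissonPrimitive B p.asIdeal} |
          s ⊆ p.1.asIdeal} := by
        ext p
        obtain ⟨m0, hm0max, hm0core⟩ := p.2
        have hQpr : p.1.asIdeal.IsPrime := p.1.2
        have hQpois : IsPoissonIdeal B p.1.asIdeal := hm0core ▸ core_poisson B m0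
        obtain ⟨g, hgQ, hgkey⟩ := exists_g B hloc hQpr hQpois p.2
        constructor
        · intro hpX
          have hfM0 : f ⟨⟨m0, hm0max.isPrime⟩, hm0max⟩ = p :=
            Subtype.ext (PrimeSpectrum.ext hm0core)
          have hM0 : s ⊆ (m0 : Set R) := by
            have hmem : (⟨⟨m0, hm0max.isPrime⟩, hm0max⟩ :
                {m : PrimeSpectrum R // m.asIdeal.IsMaximal}) ∈ f ⁻¹' X := by
              rw [Set.mem_preimage, hfM0]; exact hpX
            rw [hs] at hmem
            exact hmem
          intro x hxs
          have hj : g * x ∈ p.1.asIdeal.jacobson := by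
            rw [Ideal.jacobson]
            refine Ideal.mem_sInf.mpr ?_
            rintro n ⟨hQn, hnmax⟩
            by_cases hgn : g ∈ n
            · exact Ideal.mul_mem_right x n hgn
            · have hcoren : poissonCore B n = p.1.asIdeal :=
                hgkey (poissonCore B n) (core_prime B hnmax.isPrime) (core_poisson B n)
                  (le_core B hQpois hQn) (fun hgc => hgn (core_le B n hgc))
              have hfn : f ⟨⟨n, hnmax.isPrime⟩, hnmax⟩ = p :=
                Subtype.ext (PrimeSpectrum.ext hcoren)
              have hmem : (⟨⟨n, hnmax.isPrime⟩, hnmax⟩ :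
                  {m : PrimeSpectrum R // m.asIdeal.IsMaximal}) ∈ f ⁻¹' X := by
                rw [Set.mem_preimage, hfn]; exact hpX
              rw [hs] at hmem
              exact Ideal.mul_mem_left n g (hmem hxs)
          rw [jac_prime hQpr] at hj
          exact (hQpr.mem_or_mem hj).resolve_left hgQ
        · intro hsQ
          obtain ⟨n, hnmax, hQn, hgn⟩ := exists_max_avoid hQpr hgQ
          have hcoren : poissonCore B n = p.1.asIdeal :=
            hgkey (poissonCore B n) (core_prime B hnmax.isPrime) (core_poisson B n)
              (le_core B hQpois hQn) (fun hgc => hgn (core_le B n hgc))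
          have hfn : f ⟨⟨n, hnmax.isPrime⟩, hnmax⟩ = p :=
            Subtype.ext (PrimeSpectrum.ext hcoren)
          have hmem : (⟨⟨n, hnmax.isPrime⟩, hnmax⟩ :
              {m : PrimeSpectrum R // m.asIdeal.IsMaximal}) ∈ f ⁻¹' X := by
            rw [hs]
            exact fun x hx => hQn (hsQ hx)
          rw [Set.mem_preimage, hfn] at hmem
          exact hmem
      rw [hXeq]
      exact (closed_iff _).mpr ⟨s, rfl⟩
  refine ⟨f, fun m => rfl, ?_, ?_, key⟩
  · exact continuous_iff_isClosed.mpr fun C hC => (key C).mp hC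
  · rintro ⟨pp, hprim⟩
    obtain ⟨m0, hm0max, hm0core⟩ := hprim
    exact ⟨⟨⟨m0, hm0max.isPrime⟩, hm0max⟩, Subtype.ext (PrimeSpectrum.ext hm0core)⟩
end

section
/- Let k be a field of characteristic zero, let A be a commutative noetherian ring, and let R be a commutative noetherian k-algebra equipped with a Poisson bracket. Then a bijection φ from Spec A onto P.spec R is a homeomorphism (with respect to the Zariski topology on Spec A and the subspace topology on P.spec R) if and only if both φ and its inverse preserve inclusions of ideals, i.e. P ⊆ Q if and only if φ(P) ⊆ φ(Q) for all primes P, Q of A. -/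
open TopologicalSpace Set

/-- Auxiliary: a bijection between topological spaces such that specialization is
mirrored, with noetherian and sober-ish source, is a closed map. -/
lemma aux_isClosedMap_of_spec {X Y : Type*} [TopologicalSpace X] [TopologicalSpace Y]
    [NoetherianSpace X]
    (hsob : ∀ S : Set X, IsIrreducible S → IsClosed S → ∃ x, closure ({x} : Set X) = S)
    (f : X → Y) (hf : Function.Bijective f)
    (h : ∀ x y : X, y ∈ closure ({x} : Set X) ↔ f y ∈ closure ({f x} : Set Y)) :
    IsClosedMap f := by
  intro C hC
  obtain ⟨S, hSirr, hSeq⟩ := NoetherianSpace.exists_finset_irreducible (⟨C, hC⟩ : Closeds X)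
  have hCeq : C = ⋃ k ∈ S, (k : Set X) := by
    have := congrArg (fun s : Closeds X => (s : Set X)) hSeq
    simpa [Closeds.coe_finset_sup] using this
  rw [hCeq, Set.image_iUnion₂]
  apply Set.Finite.isClosed_biUnion (S.finite_toSet)
  intro kk hk
  obtain ⟨x, hx⟩ := hsob kk (hSirr ⟨kk, hk⟩) kk.isClosed
  have : f '' (kk : Set X) = closure ({f x} : Set Y) := by
    rw [← hx]
    ext z
    constructor
    · rintro ⟨y, hy, rfl⟩
      exact (h x y).mp hy
    · intro hz
      obtain ⟨y, rfl⟩ := hf.surjective z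
      exact ⟨y, (h x y).mpr hz, rfl⟩
  rw [this]
  exact isClosed_closure

/-- The Poisson prime spectrum, as a subtype of the prime spectrum. -/
abbrev PSpecX {k R : Type*} [CommRing k] [CommRing R] [Algebra k R] (B : PoissonBracket k R) :=
  {p : PrimeSpectrum R // IsPoissonIdeal B p.asIdeal}

/-- The Poisson prime spectrum is sober: every irreducible closed subset has a
generic point, namely the intersection of its members (a Poisson prime). -/
lemma aux_pspec_sober {k R : Type*} [CommRing k] [CommRing R] [Algebra k R]
    (B : PoissonBracket k R) (S : Set (PSpecX B))
    (hirr : IsIrreducible S) (hcl : IsClosed S) :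
    ∃ x, closure ({x} : Set (PSpecX B)) = S := by
  set I : Ideal R := ⨅ q ∈ S, (q : PSpecX B).1.asIdeal with hI
  have memI : ∀ x : R, x ∈ I ↔ ∀ q ∈ S, x ∈ (q : PSpecX B).1.asIdeal := by
    intro x; simp [hI, Ideal.mem_iInf]
  obtain ⟨q0, hq0⟩ := hirr.1
  have hIprime : I.IsPrime := by
    constructor
    · intro htop
      have : (1 : R) ∈ I := htop ▸ Submodule.mem_top
      exact q0.1.isPrime.ne_top (Ideal.eq_top_of_isUnit_mem _ ((memI 1).mp this q0 hq0) isUnit_one)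
    · intro a b hab
      by_contra hcon
      push_neg at hcon
      obtain ⟨ha, hb⟩ := hcon
      have hcover : S ⊆ (Subtype.val ⁻¹' PrimeSpectrum.zeroLocus {a}) ∪
          (Subtype.val ⁻¹' PrimeSpectrum.zeroLocus {b}) := by
        intro q hq
        have : a * b ∈ (q : PSpecX B).1.asIdeal := (memI _).mp hab q hq
        rcases q.1.isPrime.mem_or_mem this with h | h
        · left; simpa [PrimeSpectrum.mem_zeroLocus] using h
        · right; simpa [PrimeSpectrum.mem_zeroLocus] using h
      have hZa : IsClosed (Subtype.val ⁻¹' PrimeSpectrum.zeroLocus ({a} : Set R) :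
          Set (PSpecX B)) :=
        (PrimeSpectrum.isClosed_zeroLocus _).preimage continuous_subtype_val
      have hZb : IsClosed (Subtype.val ⁻¹' PrimeSpectrum.zeroLocus ({b} : Set R) :
          Set (PSpecX B)) :=
        (PrimeSpectrum.isClosed_zeroLocus _).preimage continuous_subtype_val
      rcases (isPreirreducible_iff_isClosed_union_isClosed.mp hirr.2 _ _ hZa hZb hcover) with h | h
      · exact ha ((memI a).mpr fun q hq => by simpa [PrimeSpectrum.mem_zeroLocus] using h hq)
      · exact hb ((memI b).mpr fun q hq => by simpa [PrimeSpectrum.mem_zeroLocus] using h hq)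
  have hIpoisson : IsPoissonIdeal B I := by
    intro a x hx
    exact (memI _).mpr fun q hq => q.2 a x ((memI x).mp hx q hq)
  refine ⟨⟨⟨I, hIprime⟩, hIpoisson⟩, ?_⟩
  have hxS : (⟨⟨I, hIprime⟩, hIpoisson⟩ : PSpecX B) ∈ S := by
    obtain ⟨C, hCcl, rfl⟩ := isClosed_induced_iff.mp hcl
    obtain ⟨s, rfl⟩ := (PrimeSpectrum.isClosed_iff_zeroLocus _).mp hCcl
    rw [Set.mem_preimage, PrimeSpectrum.mem_zeroLocus]
    intro t ht
    exact (memI t).mpr fun q hq => (PrimeSpectrum.mem_zeroLocus _ _).mp hq ht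
  apply subset_antisymm
  · exact closure_minimal (Set.singleton_subset_iff.mpr hxS) hcl
  · intro q hq
    rw [closure_subtype, Set.image_singleton]
    rw [← PrimeSpectrum.le_iff_mem_closure]
    show I ≤ (q : PSpecX B).1.asIdeal
    exact fun t ht => (memI t).mp ht q hq

/-- Specialization in the Poisson prime spectrum corresponds to inclusion of ideals. -/
lemma aux_mem_closure_iff {k R : Type*} [CommRing k] [CommRing R] [Algebra k R]
    (B : PoissonBracket k R) (x y : PSpecX B) :
    y ∈ closure ({x} : Set (PSpecX B)) ↔ x.1.asIdeal ≤ y.1.asIdeal := by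
  rw [closure_subtype, Set.image_singleton, ← PrimeSpectrum.le_iff_mem_closure,
    ← PrimeSpectrum.asIdeal_le_asIdeal]

/-- a bijection from `Spec A` onto the Poisson prime spectrum of `R` is a
homeomorphism if and only if it and its inverse preserve inclusions. -/
theorem homeomorph_iff_preserves_inclusions (k A R : Type*) [Field k] [CharZero k]
    [CommRing A] [IsNoetherianRing A] [CommRing R] [Algebra k R] [IsNoetherianRing R]
    (B : PoissonBracket k R)
    (f : PrimeSpectrum A → {p : PrimeSpectrum R // IsPoissonIdeal B p.asIdeal})
    (hf : Function.Bijective f) :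
    IsHomeomorph f ↔
      ∀ P Q : PrimeSpectrum A, (P.asIdeal ≤ Q.asIdeal ↔ (f P).1.asIdeal ≤ (f Q).1.asIdeal) := by
  haveI : NoetherianSpace (PrimeSpectrum A) := inferInstance
  haveI : NoetherianSpace (PSpecX B) :=
    (Topology.IsInducing.subtypeVal
      (t := {p : PrimeSpectrum R | IsPoissonIdeal B p.asIdeal})).noetherianSpace
  have hclA : ∀ P Q : PrimeSpectrum A,
      Q ∈ closure ({P} : Set (PrimeSpectrum A)) ↔ P.asIdeal ≤ Q.asIdeal := by
    intro P Q
    rw [← PrimeSpectrum.le_iff_mem_closure, ← PrimeSpectrum.asIdeal_le_asIdeal]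
  constructor
  · intro hfh P Q
    rw [← hclA, ← aux_mem_closure_iff (B := B) (f P) (f Q),
      hfh.isInducing.closure_eq_preimage_closure_image ({P} : Set (PrimeSpectrum A)),
      Set.mem_preimage, Set.image_singleton]
  · intro h
    have hcond : ∀ P Q : PrimeSpectrum A,
        Q ∈ closure ({P} : Set (PrimeSpectrum A)) ↔
          f Q ∈ closure ({f P} : Set (PSpecX B)) := by
      intro P Q
      rw [hclA, aux_mem_closure_iff (B := B) (f P) (f Q)]
      exact h P Q
    have hsobA : ∀ S : Set (PrimeSpectrum A), IsIrreducible S → IsClosed S →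
        ∃ x, closure ({x} : Set (PrimeSpectrum A)) = S := by
      intro S hirr hcl
      obtain ⟨x, hx⟩ := QuasiSober.sober hirr hcl
      exact ⟨x, hx⟩
    have hclosed_f : IsClosedMap f := aux_isClosedMap_of_spec hsobA f hf hcond
    set e : PrimeSpectrum A ≃ PSpecX B := Equiv.ofBijective f hf with he
    have hfg : ∀ y, f (e.symm y) = y := fun y => e.apply_symm_apply y
    have hgf : ∀ x, e.symm (f x) = x := fun x => e.symm_apply_apply x
    have hcond_g : ∀ x y : PSpecX B,
        y ∈ closure ({x} : Set (PSpecX B)) ↔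
          e.symm y ∈ closure ({e.symm x} : Set (PrimeSpectrum A)) := by
      intro x y
      rw [hcond (e.symm x) (e.symm y), hfg, hfg]
    have hclosed_g : IsClosedMap (e.symm : PSpecX B → PrimeSpectrum A) :=
      aux_isClosedMap_of_spec (aux_pspec_sober B) _ e.symm.bijective hcond_g
    have hcont : Continuous f := by
      rw [continuous_iff_isClosed]
      intro C hC
      have : f ⁻¹' C = e.symm '' C := by
        ext z
        constructor
        · intro hz
          exact ⟨f z, hz, hgf z⟩
        · rintro ⟨w, hw, rfl⟩
          rw [Set.mem_preimage, hfg]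
          exact hw
      rw [this]
      exact hclosed_g C hC
    refine ⟨hcont, ?_, hf⟩
    intro U hU
    have : f '' U = (f '' Uᶜ)ᶜ := by
      rw [Set.image_compl_eq hf, compl_compl]
    rw [this]
    exact (hclosed_f _ hU.isClosed_compl).isOpen_compl
end

section
/- Let k be a field of characteristic zero, let A be a commutative noetherian Jacobson ring, and let R be a commutative affine (finitely generated) k-algebra equipped with a Poisson bracket. Then any homeomorphism φ : maxspec A → P.prim R extends uniquely to a homeomorphism Spec A → P.spec R. -/
section Alg

variable {k R : Type*} [CommRing k] [CommRing R] [Algebra k R] (B : PoissonBracket k R)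

lemma PoissonBracket.zero_right (a : R) : B.bracket a 0 = 0 := by
  have h := (B.add_right a 0 0).symm
  simp only [add_zero] at h
  rwa [add_eq_left] at h

/-- Iterated bracketing, innermost first. -/
def pIter (l : List R) (x : R) : R := l.foldl (fun y a => B.bracket a y) x

@[simp] lemma pIter_nil (x : R) : pIter B [] x = x := rfl

@[simp] lemma pIter_cons (a : R) (l : List R) (x : R) :
    pIter B (a :: l) x = pIter B l (B.bracket a x) := rfl

lemma pIter_add (l : List R) (x y : R) :
    pIter B l (x + y) = pIter B l x + pIter B l y := by
  induction l generalizing x y with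
  | nil => rfl
  | cons a l ih => simp only [pIter_cons, B.add_right, ih]

lemma pIter_zero (l : List R) : pIter B l (0 : R) = 0 := by
  induction l with
  | nil => rfl
  | cons a l ih => simp only [pIter_cons, B.zero_right, ih]

lemma pIter_mul_mem {J : Ideal R} (l : List R) (r x : R)
    (H : ∀ l', pIter B l' x ∈ J) : pIter B l (r * x) ∈ J := by
  induction l generalizing r x with
  | nil => exact J.mul_mem_left r (H [])
  | cons a l ih =>
    rw [pIter_cons, B.leibniz, pIter_add]
    exact J.add_mem (ih (B.bracket a r) x H)
      (ih r (B.bracket a x) (fun l' => H (a :: l')))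

/-- The explicit Poisson core. -/
def pCore (J : Ideal R) : Ideal R where
  carrier := {x | ∀ l, pIter B l x ∈ J}
  add_mem' := fun hx hy l => by rw [pIter_add]; exact J.add_mem (hx l) (hy l)
  zero_mem' := fun l => by rw [pIter_zero]; exact J.zero_mem
  smul_mem' := fun r x hx l => by
    simpa only [smul_eq_mul] using pIter_mul_mem B l r x hx

lemma mem_pCore {J : Ideal R} {x : R} : x ∈ pCore B J ↔ ∀ l, pIter B l x ∈ J := Iff.rfl

lemma pCore_le (J : Ideal R) : pCore B J ≤ J := fun x hx => hx []

lemma isPoissonIdeal_pCore (J : Ideal R) : IsPoissonIdeal B (pCore B J) :=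
  fun a x hx l => hx (a :: l)

lemma pIter_mem_of_poisson {I : Ideal R} (hI : IsPoissonIdeal B I) :
    ∀ (l : List R) (x : R), x ∈ I → pIter B l x ∈ I := by
  intro l
  induction l with
  | nil => intro x hx; exact hx
  | cons a l ih => intro x hx; exact ih _ (hI a x hx)

lemma le_pCore {I J : Ideal R} (hI : IsPoissonIdeal B I) (hIJ : I ≤ J) :
    I ≤ pCore B J :=
  fun x hx l => hIJ (pIter_mem_of_poisson B hI l x hx)

lemma poissonCore_eq_pCore (J : Ideal R) : poissonCore B J = pCore B J :=
  le_antisymm (sSup_le fun I hI => le_pCore B hI.1 hI.2)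
    (le_sSup ⟨isPoissonIdeal_pCore B J, pCore_le B J⟩)

lemma poissonCore_le (J : Ideal R) : poissonCore B J ≤ J := by
  rw [poissonCore_eq_pCore]; exact pCore_le B J

lemma isPoissonIdeal_poissonCore (J : Ideal R) : IsPoissonIdeal B (poissonCore B J) := by
  rw [poissonCore_eq_pCore]; exact isPoissonIdeal_pCore B J

lemma le_poissonCore {I J : Ideal R} (hI : IsPoissonIdeal B I) (hIJ : I ≤ J) :
    I ≤ poissonCore B J := by
  rw [poissonCore_eq_pCore]; exact le_pCore B hI hIJ

lemma bracket_pow (a x : R) (m : ℕ) :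
    B.bracket a (x ^ (m + 1)) = ((m : R) + 1) * (x ^ m * B.bracket a x) := by
  induction m with
  | zero => simp
  | succ m ih =>
    rw [pow_succ, mul_comm (x ^ (m+1)) x, B.leibniz, ih]
    push_cast
    ring

end Alg

section Units

variable {R : Type*} [CommRing R]

lemma natCast_isUnit (k : Type*) [Field k] [CharZero k] [Algebra k R] (c : ℕ) (hc : c ≠ 0) :
    IsUnit (c : R) := by
  have h1 : (c : k) ≠ 0 := Nat.cast_ne_zero.mpr hc
  have : IsUnit (c : k) := isUnit_iff_ne_zero.mpr h1
  have := this.map (algebraMap k R)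
  rwa [map_natCast] at this

lemma mem_of_natCast_mul_mem (k : Type*) [Field k] [CharZero k] [Algebra k R]
    {I : Ideal R} {c : ℕ} (hc : c ≠ 0) {z : R}
    (h : (c : R) * z ∈ I) : z ∈ I := by
  obtain ⟨u, hu⟩ := natCast_isUnit (R := R) k c hc
  have hz : (↑u⁻¹ : R) * ((c : R) * z) = z := by
    rw [← hu, ← mul_assoc, Units.inv_mul, one_mul]
  rw [← hz]
  exact I.mul_mem_left _ h

end Units

section CharZeroAlg

variable {k R : Type*} [Field k] [CharZero k] [CommRing R] [Algebra k R]
  (B : PoissonBracket k R)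

variable {B} in
lemma poisson_radical_step {I : Ideal R} (hI : IsPoissonIdeal B I) (a x : R) (m j : ℕ)
    (h : x ^ (m + 1) * (B.bracket a x) ^ (2 * j + 1) ∈ I) :
    x ^ m * (B.bracket a x) ^ (2 * j + 3) ∈ I := by
  set d := B.bracket a x with hd
  have hder : B.bracket a (x ^ (m + 1) * d ^ (2 * j + 1)) ∈ I := hI a _ h
  have h2 : d * B.bracket a (x ^ (m + 1) * d ^ (2 * j + 1)) ∈ I := I.mul_mem_left _ hder
  have h3 : ((2 * j : R) + 1) * B.bracket a d * (x ^ (m + 1) * d ^ (2 * j + 1)) ∈ I :=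
    I.mul_mem_left _ h
  have key : ((m : R) + 1) * (x ^ m * d ^ (2 * j + 3)) =
      d * B.bracket a (x ^ (m + 1) * d ^ (2 * j + 1))
        - ((2 * j : R) + 1) * B.bracket a d * (x ^ (m + 1) * d ^ (2 * j + 1)) := by
    rw [B.leibniz, bracket_pow, bracket_pow]
    push_cast
    ring
  have hmem : ((m : R) + 1) * (x ^ m * d ^ (2 * j + 3)) ∈ I := by
    rw [key]; exact I.sub_mem h2 h3
  have : ((m + 1 : ℕ) : R) * (x ^ m * d ^ (2 * j + 3)) ∈ I := by push_cast; exact hmem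
  exact mem_of_natCast_mul_mem k (Nat.succ_ne_zero m) this

variable {B} in
lemma poisson_radical_desc {I : Ideal R} (hI : IsPoissonIdeal B I) (a x : R) (m : ℕ) :
    ∀ j : ℕ, x ^ m * (B.bracket a x) ^ (2 * j + 1) ∈ I →
      (B.bracket a x) ^ (2 * (j + m) + 1) ∈ I := by
  induction m with
  | zero => intro j h; simpa using h
  | succ m ih =>
    intro j h
    have h1 := poisson_radical_step hI a x m j h
    have h2 : x ^ m * (B.bracket a x) ^ (2 * (j + 1) + 1) ∈ I := by
      have e : 2 * (j + 1) + 1 = 2 * j + 3 := by ring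
      rw [e]; exact h1
    have h3 := ih (j + 1) h2
    have e : 2 * (j + (m + 1)) + 1 = 2 * ((j + 1) + m) + 1 := by ring
    rw [e]; exact h3

variable {B} in
lemma isPoissonIdeal_radical {I : Ideal R} (hI : IsPoissonIdeal B I) :
    IsPoissonIdeal B I.radical := by
  intro a x hx
  obtain ⟨n, hn⟩ := Ideal.mem_radical_iff.mp hx
  cases n with
  | zero =>
    have : I = ⊤ := (Ideal.eq_top_iff_one _).mpr (by simpa using hn)
    rw [Ideal.mem_radical_iff]
    exact ⟨1, by simp [this]⟩
  | succ m =>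
    have hder : B.bracket a (x ^ (m + 1)) ∈ I := hI a _ hn
    rw [bracket_pow] at hder
    have : ((m + 1 : ℕ) : R) * (x ^ m * B.bracket a x) ∈ I := by push_cast; exact hder
    have hbase : x ^ m * (B.bracket a x) ^ (2 * 0 + 1) ∈ I := by
      simpa using mem_of_natCast_mul_mem k (Nat.succ_ne_zero m) this
    exact Ideal.mem_radical_iff.mpr ⟨2 * (0 + m) + 1, poisson_radical_desc hI a x m 0 hbase⟩

variable {B} in
/-- A minimal prime over a radical Poisson ideal, in a Noetherian ring, is Poisson;
consequently in characteristic zero the Poisson core of a prime ideal is prime. -/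
theorem poissonCore_isPrime [IsNoetherianRing R] {m : Ideal R} (hm : m.IsPrime) :
    (poissonCore B m).IsPrime := by
  set I := poissonCore B m with hIdef
  have hIP : IsPoissonIdeal B I := isPoissonIdeal_poissonCore B m
  have hIm : I ≤ m := poissonCore_le B m
  have hrad : I.radical = I :=
    le_antisymm (le_poissonCore B (isPoissonIdeal_radical hIP) (hm.radical_le_iff.mpr hIm))
      Ideal.le_radical
  haveI := hm
  obtain ⟨Q, hQ, hQm⟩ := Ideal.exists_minimalPrimes_le hIm
  have hQprime : Q.IsPrime := hQ.1.1
  have hIQ : I ≤ Q := hQ.1.2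
  have hQmem : Q ∈ I.minimalPrimes := hQ
  -- minimal primes are finite
  have hfin : I.minimalPrimes.Finite := by
    rw [Ideal.minimalPrimes_eq_comap]
    exact (minimalPrimes.finite_of_isNoetherianRing (R ⧸ I)).image _
  have hsInf : sInf I.minimalPrimes = I := by
    rw [Ideal.sInf_minimalPrimes, hrad]
  have hQI : Q ≤ I := by
    by_cases hsub : I.minimalPrimes ⊆ {Q}
    · have hset : I.minimalPrimes = {Q} :=
        subset_antisymm hsub (Set.singleton_subset_iff.mpr hQmem)
      rw [← hsInf, hset, sInf_singleton]
    · -- there is another minimal prime; find y in all others, not in Q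
      have hQPoisson : IsPoissonIdeal B Q := by
        obtain ⟨y, hy1, hy2⟩ : ∃ y, y ∈ sInf (I.minimalPrimes \ {Q}) ∧ y ∉ Q := by
          by_contra hcon
          push_neg at hcon
          have hle : sInf (I.minimalPrimes \ {Q}) ≤ Q := fun y hy => hcon y hy
          have hfin' : (I.minimalPrimes \ {Q}).Finite := hfin.subset Set.diff_subset
          have hco : ((hfin'.toFinset : Finset (Ideal R)) : Set (Ideal R))
              = I.minimalPrimes \ {Q} := hfin'.coe_toFinset
          have hle2 : hfin'.toFinset.inf id ≤ Q := by
            rw [Finset.inf_id_eq_sInf, hco]; exact hle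
          obtain ⟨P, hP1, hP2⟩ := (hQprime.inf_le').mp hle2
          rw [Set.Finite.mem_toFinset] at hP1
          have hQP : Q ≤ P := hQ.2 ⟨hP1.1.1.1, hP1.1.1.2⟩ hP2
          exact hP1.2 (le_antisymm hP2 hQP)
        intro a x hx
        have hxy : x * y ∈ I := by
          rw [← hsInf, Ideal.mem_sInf]
          intro P hP
          by_cases hPQ : P = Q
          · subst hPQ; exact P.mul_mem_right y hx
          · exact P.mul_mem_left x (Ideal.mem_sInf.mp hy1 ⟨hP, hPQ⟩)
        have hb : B.bracket a x * y + x * B.bracket a y ∈ Q := by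
          have := hIP a _ hxy
          rw [B.leibniz] at this
          exact hIQ this
        have h2 : x * B.bracket a y ∈ Q := Q.mul_mem_right _ hx
        have h3 : B.bracket a x * y ∈ Q := by
          have := Q.sub_mem hb h2; simpa using this
        exact (hQprime.mem_or_mem h3).resolve_right hy2
      exact le_poissonCore B hQPoisson hQm
  have : I = Q := le_antisymm hIQ hQI
  rw [this]
  exact hQprime

end CharZeroAlg

section Primitive

variable {k R : Type*} [Field k] [CharZero k] [CommRing R] [Algebra k R]
  {B : PoissonBracket k R}

lemma poissonPrimitive_inf [IsNoetherianRing R] [IsJacobsonRing R] {q : Ideal R}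
    (hq : q.IsPrime) (hqP : IsPoissonIdeal B q) :
    sInf {P : Ideal R | P.IsPrime ∧ IsPoissonIdeal B P ∧ IsPoissonPrimitive B P ∧ q ≤ P} = q := by
  apply le_antisymm
  · have hj : q.jacobson = q := IsJacobsonRing.out ‹IsJacobsonRing R› hq.isRadical
    have hj' : sInf {J : Ideal R | q ≤ J ∧ J.IsMaximal} = q := hj
    refine le_trans (le_sInf fun m hm => ?_) hj'.le
    refine sInf_le_of_le (b := poissonCore B m) ?_ ((poissonCore_le B m).trans le_rfl)
    exact ⟨poissonCore_isPrime hm.2.isPrime, isPoissonIdeal_poissonCore B m,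
      ⟨m, hm.2, rfl⟩, le_poissonCore B hqP hm.1⟩
  · exact le_sInf fun P hP => hP.2.2.2

end Primitive

section Closed

open PrimeSpectrum

variable {S : Type*} [CommRing S] {P : PrimeSpectrum S → Prop}

lemma isClosed_le1 (I : Ideal S) :
    IsClosed {x : {x : PrimeSpectrum S // P x} | I ≤ x.1.asIdeal} := by
  have h : {x : {x : PrimeSpectrum S // P x} | I ≤ x.1.asIdeal}
      = Subtype.val ⁻¹' PrimeSpectrum.zeroLocus (I : Set S) := by
    ext x; simp [PrimeSpectrum.mem_zeroLocus, SetLike.coe_subset_coe]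
  rw [h]; exact (PrimeSpectrum.isClosed_zeroLocus _).preimage continuous_subtype_val

lemma closed_eq1 {C : Set {x : PrimeSpectrum S // P x}} (hC : IsClosed C) :
    ∃ I : Ideal S, C = {x | I ≤ x.1.asIdeal} := by
  obtain ⟨Z, hZ, hZC⟩ := isClosed_induced_iff.mp hC
  obtain ⟨I, rfl⟩ := (PrimeSpectrum.isClosed_iff_zeroLocus_ideal Z).mp hZ
  refine ⟨I, ?_⟩
  rw [← hZC]; ext x; simp [PrimeSpectrum.mem_zeroLocus, SetLike.coe_subset_coe]

variable {Q : {x : PrimeSpectrum S // P x} → Prop}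

lemma isClosed_le2 (I : Ideal S) :
    IsClosed {y : {y : {x : PrimeSpectrum S // P x} // Q y} | I ≤ y.1.1.asIdeal} :=
  (isClosed_le1 I).preimage continuous_subtype_val

lemma isClosed_mem2 (a : S) :
    IsClosed {y : {y : {x : PrimeSpectrum S // P x} // Q y} | a ∈ y.1.1.asIdeal} := by
  have h : {y : {y : {x : PrimeSpectrum S // P x} // Q y} | a ∈ y.1.1.asIdeal}
      = {y : {y : {x : PrimeSpectrum S // P x} // Q y} | Ideal.span {a} ≤ y.1.1.asIdeal} := by
    ext y; simp [Ideal.span_singleton_le_iff_mem]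
  rw [h]; exact isClosed_le2 _

lemma isClosed_mem1 (a : S) :
    IsClosed {x : {x : PrimeSpectrum S // P x} | a ∈ x.1.asIdeal} := by
  have h : {x : {x : PrimeSpectrum S // P x} | a ∈ x.1.asIdeal}
      = {x : {x : PrimeSpectrum S // P x} | Ideal.span {a} ≤ x.1.asIdeal} := by
    ext x; simp [Ideal.span_singleton_le_iff_mem]
  rw [h]; exact isClosed_le1 _

lemma closed_eq2 {C : Set {y : {x : PrimeSpectrum S // P x} // Q y}} (hC : IsClosed C) :
    ∃ I : Ideal S, C = {y | I ≤ y.1.1.asIdeal} := by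
  obtain ⟨Z, hZ, hZC⟩ := isClosed_induced_iff.mp hC
  obtain ⟨I, rfl⟩ := closed_eq1 hZ
  exact ⟨I, by rw [← hZC]; rfl⟩

end Closed

section Main

variable {k A R : Type*} [Field k] [CharZero k] [CommRing A] [CommRing R] [Algebra k R]

abbrev MaxSpec (A : Type*) [CommRing A] := {m : PrimeSpectrum A // m.asIdeal.IsMaximal}

abbrev PSpec (B : PoissonBracket k R) := {q : PrimeSpectrum R // IsPoissonIdeal B q.asIdeal}

abbrev PPrim (B : PoissonBracket k R) := {p : PSpec B // IsPoissonPrimitive B p.1.asIdeal}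

variable (B : PoissonBracket k R)

def fwdIdeal (f : MaxSpec A → PPrim B) (p : PrimeSpectrum A) : Ideal R :=
  ⨅ m : {m : MaxSpec A // p.asIdeal ≤ m.1.asIdeal}, (f m.1).1.1.asIdeal

def bwdIdeal (g : PPrim B → MaxSpec A) (y : PSpec B) : Ideal A :=
  ⨅ n : {n : PPrim B // y.1.asIdeal ≤ n.1.1.asIdeal}, (g n.1).1.asIdeal

lemma fwdIdeal_le (f : MaxSpec A → PPrim B) (p : PrimeSpectrum A)
    (m : {m : MaxSpec A // p.asIdeal ≤ m.1.asIdeal}) :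
    fwdIdeal B f p ≤ (f m.1).1.1.asIdeal := by
  rw [fwdIdeal]; exact iInf_le _ m

lemma bwdIdeal_le (g : PPrim B → MaxSpec A) (y : PSpec B)
    (n : {n : PPrim B // y.1.asIdeal ≤ n.1.1.asIdeal}) :
    bwdIdeal B g y ≤ (g n.1).1.asIdeal := by
  rw [bwdIdeal]; exact iInf_le _ n

lemma X_dense [IsJacobsonRing A] (p : PrimeSpectrum A) :
    (⨅ m : {m : MaxSpec A // p.asIdeal ≤ m.1.asIdeal}, m.1.1.asIdeal) = p.asIdeal := by
  apply le_antisymm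
  · have hj : p.asIdeal.jacobson = p.asIdeal :=
      IsJacobsonRing.out ‹IsJacobsonRing A› p.isPrime.isRadical
    have hj' : sInf {J : Ideal A | p.asIdeal ≤ J ∧ J.IsMaximal} = p.asIdeal := hj
    refine le_trans (le_sInf fun J hJ => ?_) hj'.le
    exact iInf_le_of_le ⟨⟨⟨J, hJ.2.isPrime⟩, hJ.2⟩, hJ.1⟩ le_rfl
  · exact le_iInf fun m => m.2

lemma Y_dense [IsNoetherianRing R] [IsJacobsonRing R] (y : PSpec B) :
    (⨅ n : {n : PPrim B // y.1.asIdeal ≤ n.1.1.asIdeal}, n.1.1.1.asIdeal) = y.1.asIdeal := by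
  apply le_antisymm
  · have hinf := poissonPrimitive_inf (B := B) y.1.isPrime y.2
    refine le_trans (le_sInf fun Pd hPd => ?_) hinf.le
    exact iInf_le_of_le ⟨⟨⟨⟨Pd, hPd.1⟩, hPd.2.1⟩, hPd.2.2.1⟩, hPd.2.2.2⟩ le_rfl
  · exact le_iInf fun n => n.2

end Main

/-- for a commutative noetherian Jacobson ring `A` and a commutative affine
Poisson algebra `R` over a characteristic-zero field, any homeomorphism from the maximal
spectrum of `A` onto the Poisson-primitive spectrum of `R` extends uniquely to a
homeomorphism from `Spec A` onto the Poisson prime spectrum of `R`. -/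
theorem extend_maxSpec_homeomorph (k A R : Type*) [Field k] [CharZero k]
    [CommRing A] [IsNoetherianRing A] [IsJacobsonRing A]
    [CommRing R] [Algebra k R] [Algebra.FiniteType k R] (B : PoissonBracket k R)
    (f : {m : PrimeSpectrum A // m.asIdeal.IsMaximal} →
        {p : {q : PrimeSpectrum R // IsPoissonIdeal B q.asIdeal} //
          IsPoissonPrimitive B p.1.asIdeal})
    (hf : IsHomeomorph f) :
    ∃! f' : PrimeSpectrum A → {q : PrimeSpectrum R // IsPoissonIdeal B q.asIdeal},
      IsHomeomorph f' ∧
        ∀ m : {m : PrimeSpectrum A // m.asIdeal.IsMaximal}, f' m.1 = (f m).1 := by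
  classical
  haveI : IsNoetherianRing R := Algebra.FiniteType.isNoetherianRing k R
  haveI : IsJacobsonRing R := isJacobsonRing_of_finiteType (A := k)
  let e := hf.homeomorph f
  have hecoe : ⇑e = f := rfl
  have hsymmf : ∀ m : MaxSpec A, e.symm (f m) = m := by
    intro m
    rw [← hecoe]; exact e.symm_apply_apply m
  have hfsymm : ∀ n : PPrim B, f (e.symm n) = n := by
    intro n
    rw [← hecoe]; exact e.apply_symm_apply n
  -- forward map: primality
  have prime_fwd : ∀ p : PrimeSpectrum A, (fwdIdeal B f p).IsPrime := by
    intro p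
    obtain ⟨m0, hm0max, hm0le⟩ := Ideal.exists_le_maximal p.asIdeal p.isPrime.ne_top
    constructor
    · intro htop
      have h1 : fwdIdeal B f p ≤ (f ⟨⟨m0, hm0max.isPrime⟩, hm0max⟩).1.1.asIdeal :=
        fwdIdeal_le B f p ⟨⟨⟨m0, hm0max.isPrime⟩, hm0max⟩, hm0le⟩
      rw [htop] at h1
      exact (f _).1.1.isPrime.ne_top (top_le_iff.mp h1)
    · intro a b hab
      by_cases ha : a ∈ fwdIdeal B f p
      · exact Or.inl ha
      refine Or.inr ?_
      obtain ⟨Ia, hIa⟩ := closed_eq1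
        (C := f ⁻¹' {n : PPrim B | a ∈ n.1.1.asIdeal}) ((isClosed_mem2 a).preimage hf.continuous)
      obtain ⟨Ib, hIb⟩ := closed_eq1
        (C := f ⁻¹' {n : PPrim B | b ∈ n.1.1.asIdeal}) ((isClosed_mem2 b).preimage hf.continuous)
      have hstep : Ia * Ib ≤ p.asIdeal := by
        rw [← X_dense p]
        refine le_iInf fun m => ?_
        have hm : a * b ∈ (f m.1).1.1.asIdeal := by
          rw [fwdIdeal] at hab
          exact (Submodule.mem_iInf _).mp hab m
        rcases (f m.1).1.1.isPrime.mem_or_mem hm with h | h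
        · have hmem : m.1 ∈ f ⁻¹' {n : PPrim B | a ∈ n.1.1.asIdeal} := h
          rw [hIa] at hmem
          exact le_trans Ideal.mul_le_left hmem
        · have hmem : m.1 ∈ f ⁻¹' {n : PPrim B | b ∈ n.1.1.asIdeal} := h
          rw [hIb] at hmem
          exact le_trans Ideal.mul_le_right hmem
      rcases p.isPrime.mul_le.mp hstep with h | h
      · exfalso
        apply ha
        rw [fwdIdeal]
        refine (Submodule.mem_iInf _).mpr fun m => ?_
        have hmem : m.1 ∈ {m : MaxSpec A | Ia ≤ m.1.asIdeal} := le_trans h m.2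
        rw [← hIa] at hmem
        exact hmem
      · rw [fwdIdeal]
        refine (Submodule.mem_iInf _).mpr fun m => ?_
        have hmem : m.1 ∈ {m : MaxSpec A | Ib ≤ m.1.asIdeal} := le_trans h m.2
        rw [← hIb] at hmem
        exact hmem
  have poisson_fwd : ∀ p : PrimeSpectrum A, IsPoissonIdeal B (fwdIdeal B f p) := by
    intro p a x hx
    rw [fwdIdeal] at hx ⊢
    rw [Submodule.mem_iInf] at hx ⊢
    exact fun m => (f m.1).1.2 a x (hx m)
  let F' : PrimeSpectrum A → PSpec B :=
    fun p => ⟨⟨fwdIdeal B f p, prime_fwd p⟩, poisson_fwd p⟩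
  -- backward map: primality
  have prime_bwd : ∀ y : PSpec B, (bwdIdeal B (⇑e.symm) y).IsPrime := by
    intro y
    obtain ⟨m0, hm0max, hm0le⟩ := Ideal.exists_le_maximal y.1.asIdeal y.1.isPrime.ne_top
    have n0 : {n : PPrim B // y.1.asIdeal ≤ n.1.1.asIdeal} :=
      ⟨⟨⟨⟨poissonCore B m0, poissonCore_isPrime hm0max.isPrime⟩,
        isPoissonIdeal_poissonCore B m0⟩, ⟨m0, hm0max, rfl⟩⟩,
        le_poissonCore B y.2 hm0le⟩
    constructor
    · intro htop
      have h1 : bwdIdeal B (⇑e.symm) y ≤ (e.symm n0.1).1.asIdeal := bwdIdeal_le B _ y n0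
      rw [htop] at h1
      exact (e.symm n0.1).1.isPrime.ne_top (top_le_iff.mp h1)
    · intro a b hab
      by_cases ha : a ∈ bwdIdeal B (⇑e.symm) y
      · exact Or.inl ha
      refine Or.inr ?_
      obtain ⟨Ia, hIa⟩ := closed_eq2
        (C := (⇑e.symm) ⁻¹' {m : MaxSpec A | a ∈ m.1.asIdeal})
        ((isClosed_mem1 a).preimage e.symm.continuous)
      obtain ⟨Ib, hIb⟩ := closed_eq2
        (C := (⇑e.symm) ⁻¹' {m : MaxSpec A | b ∈ m.1.asIdeal})
        ((isClosed_mem1 b).preimage e.symm.continuous)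
      have hstep : Ia * Ib ≤ y.1.asIdeal := by
        rw [← Y_dense B y]
        refine le_iInf fun n => ?_
        have hm : a * b ∈ (e.symm n.1).1.asIdeal := by
          rw [bwdIdeal] at hab
          exact (Submodule.mem_iInf _).mp hab n
        rcases (e.symm n.1).1.isPrime.mem_or_mem hm with h | h
        · have hmem : n.1 ∈ (⇑e.symm) ⁻¹' {m : MaxSpec A | a ∈ m.1.asIdeal} := h
          rw [hIa] at hmem
          exact le_trans Ideal.mul_le_left hmem
        · have hmem : n.1 ∈ (⇑e.symm) ⁻¹' {m : MaxSpec A | b ∈ m.1.asIdeal} := h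
          rw [hIb] at hmem
          exact le_trans Ideal.mul_le_right hmem
      rcases y.1.isPrime.mul_le.mp hstep with h | h
      · exfalso
        apply ha
        rw [bwdIdeal]
        refine (Submodule.mem_iInf _).mpr fun n => ?_
        have hmem : n.1 ∈ {n : PPrim B | Ia ≤ n.1.1.asIdeal} := le_trans h n.2
        rw [← hIa] at hmem
        exact hmem
      · rw [bwdIdeal]
        refine (Submodule.mem_iInf _).mpr fun n => ?_
        have hmem : n.1 ∈ {n : PPrim B | Ib ≤ n.1.1.asIdeal} := le_trans h n.2
        rw [← hIb] at hmem
        exact hmem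
  let G' : PSpec B → PrimeSpectrum A := fun y => ⟨bwdIdeal B (⇑e.symm) y, prime_bwd y⟩
  -- extension property
  have hext : ∀ m : MaxSpec A, fwdIdeal B f m.1 = (f m).1.1.asIdeal := by
    intro m
    apply le_antisymm
    · exact fwdIdeal_le B f m.1 ⟨m, le_rfl⟩
    · refine le_iInf fun m' => ?_
      have hideq : m.1.asIdeal = m'.1.1.asIdeal := m.2.eq_of_le m'.1.1.isPrime.ne_top m'.2
      have hmm : m = m'.1 := Subtype.ext (PrimeSpectrum.ext hideq)
      rw [← hmm]
  have hextF : ∀ m : MaxSpec A, F' m.1 = (f m).1 := by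
    intro m
    exact Subtype.ext (PrimeSpectrum.ext (hext m))
  -- G' ∘ F' = id
  have hleft : ∀ p : PrimeSpectrum A, G' (F' p) = p := by
    intro p
    apply PrimeSpectrum.ext
    show bwdIdeal B (⇑e.symm) (F' p) = p.asIdeal
    apply le_antisymm
    · rw [← X_dense p]
      refine le_iInf fun m => ?_
      have hidx : (F' p).1.asIdeal ≤ (f m.1).1.1.asIdeal := fwdIdeal_le B f p m
      refine le_trans (bwdIdeal_le B _ (F' p) ⟨f m.1, hidx⟩) (le_of_eq ?_)
      rw [hsymmf]
    · rw [bwdIdeal]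
      refine le_iInf fun n => ?_
      have hSpcl : IsClosed {m : MaxSpec A | p.asIdeal ≤ m.1.asIdeal} := isClosed_le1 _
      have himcl : IsClosed (f '' {m : MaxSpec A | p.asIdeal ≤ m.1.asIdeal}) :=
        hf.isClosedMap _ hSpcl
      obtain ⟨I, hI⟩ := closed_eq2 himcl
      have hIle : I ≤ fwdIdeal B f p := by
        rw [fwdIdeal]
        refine le_iInf fun m => ?_
        have hmem : f m.1 ∈ f '' {m : MaxSpec A | p.asIdeal ≤ m.1.asIdeal} :=
          ⟨m.1, m.2, rfl⟩
        rw [hI] at hmem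
        exact hmem
      have hn2 : fwdIdeal B f p ≤ n.1.1.1.asIdeal := n.2
      have hnmem : n.1 ∈ f '' {m : MaxSpec A | p.asIdeal ≤ m.1.asIdeal} := by
        rw [hI]
        exact le_trans hIle hn2
      obtain ⟨m, hm, hfm⟩ := hnmem
      have hsm : e.symm n.1 = m := by rw [← hfm, hsymmf]
      rw [hsm]
      exact hm
  -- F' ∘ G' = id
  have hright : ∀ y : PSpec B, F' (G' y) = y := by
    intro y
    apply Subtype.ext
    apply PrimeSpectrum.ext
    show fwdIdeal B f (G' y) = y.1.asIdeal
    apply le_antisymm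
    · rw [← Y_dense B y]
      refine le_iInf fun n => ?_
      have hidx : (G' y).asIdeal ≤ (e.symm n.1).1.asIdeal := bwdIdeal_le B _ y n
      refine le_trans (fwdIdeal_le B f (G' y) ⟨e.symm n.1, hidx⟩) (le_of_eq ?_)
      rw [hfsymm]
    · rw [fwdIdeal]
      refine le_iInf fun m => ?_
      have hTycl : IsClosed {n : PPrim B | y.1.asIdeal ≤ n.1.1.asIdeal} := isClosed_le2 _
      have himcl : IsClosed ((⇑e.symm) '' {n : PPrim B | y.1.asIdeal ≤ n.1.1.asIdeal}) :=
        e.symm.isClosedMap _ hTycl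
      obtain ⟨I, hI⟩ := closed_eq1 himcl
      have hIle : I ≤ bwdIdeal B (⇑e.symm) y := by
        rw [bwdIdeal]
        refine le_iInf fun n => ?_
        have hmem : e.symm n.1 ∈ (⇑e.symm) '' {n : PPrim B | y.1.asIdeal ≤ n.1.1.asIdeal} :=
          ⟨n.1, n.2, rfl⟩
        rw [hI] at hmem
        exact hmem
      have hm2 : bwdIdeal B (⇑e.symm) y ≤ m.1.1.asIdeal := m.2
      have hmmem : m.1 ∈ (⇑e.symm) '' {n : PPrim B | y.1.asIdeal ≤ n.1.1.asIdeal} := by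
        rw [hI]
        exact le_trans hIle hm2
      obtain ⟨n, hn, hnm⟩ := hmmem
      have hfmn : f m.1 = n.1 := by
        rw [← hnm, hfsymm]
      rw [hfmn]
      exact hn
  -- continuity of F'
  have contF : Continuous F' := by
    rw [continuous_iff_isClosed]
    intro C hC
    obtain ⟨Z, hZcl, hZ⟩ := isClosed_induced_iff.mp hC
    obtain ⟨I, rfl⟩ := (PrimeSpectrum.isClosed_iff_zeroLocus_ideal Z).mp hZcl
    obtain ⟨J, hJ⟩ := closed_eq1
      (C := f ⁻¹' {n : PPrim B | I ≤ n.1.1.asIdeal})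
      ((isClosed_le2 I).preimage hf.continuous)
    have key : ∀ p : PrimeSpectrum A, I ≤ fwdIdeal B f p ↔ J ≤ p.asIdeal := by
      intro p
      constructor
      · intro h
        rw [← X_dense p]
        refine le_iInf fun m => ?_
        have h1 : I ≤ (f m.1).1.1.asIdeal := le_trans h (fwdIdeal_le B f p m)
        have h2 : m.1 ∈ f ⁻¹' {n : PPrim B | I ≤ n.1.1.asIdeal} := h1
        rw [hJ] at h2
        exact h2
      · intro h
        rw [fwdIdeal]
        refine le_iInf fun m => ?_
        have h2 : m.1 ∈ {m : MaxSpec A | J ≤ m.1.asIdeal} := le_trans h m.2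
        rw [← hJ] at h2
        exact h2
    have hpre : F' ⁻¹' C = PrimeSpectrum.zeroLocus (J : Set A) := by
      ext p
      rw [← hZ]
      simp only [Set.mem_preimage, PrimeSpectrum.mem_zeroLocus, SetLike.coe_subset_coe]
      exact key p
    rw [hpre]
    exact PrimeSpectrum.isClosed_zeroLocus _
  -- continuity of G'
  have contG : Continuous G' := by
    rw [continuous_iff_isClosed]
    intro C hC
    obtain ⟨I, rfl⟩ := (PrimeSpectrum.isClosed_iff_zeroLocus_ideal C).mp hC
    obtain ⟨J, hJ⟩ := closed_eq2
      (C := (⇑e.symm) ⁻¹' {m : MaxSpec A | I ≤ m.1.asIdeal})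
      ((isClosed_le1 I).preimage e.symm.continuous)
    have key : ∀ y : PSpec B, I ≤ bwdIdeal B (⇑e.symm) y ↔ J ≤ y.1.asIdeal := by
      intro y
      constructor
      · intro h
        rw [← Y_dense B y]
        refine le_iInf fun n => ?_
        have h1 : I ≤ (e.symm n.1).1.asIdeal := le_trans h (bwdIdeal_le B _ y n)
        have h2 : n.1 ∈ (⇑e.symm) ⁻¹' {m : MaxSpec A | I ≤ m.1.asIdeal} := h1
        rw [hJ] at h2
        exact h2
      · intro h
        rw [bwdIdeal]
        refine le_iInf fun n => ?_
        have h2 : n.1 ∈ {n : PPrim B | J ≤ n.1.1.asIdeal} := le_trans h n.2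
        rw [← hJ] at h2
        exact h2
    have hpre : G' ⁻¹' PrimeSpectrum.zeroLocus (I : Set A)
        = Subtype.val ⁻¹' PrimeSpectrum.zeroLocus (J : Set R) := by
      ext y
      simp only [Set.mem_preimage, PrimeSpectrum.mem_zeroLocus, SetLike.coe_subset_coe]
      exact key y
    rw [hpre]
    exact (PrimeSpectrum.isClosed_zeroLocus _).preimage continuous_subtype_val
  have hhomeo : IsHomeomorph F' := by
    let E : PrimeSpectrum A ≃ₜ PSpec B :=
      { toFun := F', invFun := G', left_inv := hleft, right_inv := hright,
        continuous_toFun := contF, continuous_invFun := contG }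
    have hE : IsHomeomorph ⇑E := E.isHomeomorph
    exact hE
  refine ⟨F', ⟨hhomeo, hextF⟩, ?_⟩
  -- uniqueness
  rintro f'' ⟨hh1, hh2⟩
  funext p
  have key : ∀ g : PrimeSpectrum A → PSpec B, IsHomeomorph g →
      (∀ m : MaxSpec A, g m.1 = (f m).1) →
      closure {g p} = closure ((fun n : PPrim B => n.1) ''
        (f '' {m : MaxSpec A | p.asIdeal ≤ m.1.asIdeal})) := by
    intro g hg hge
    have hgcoe : ⇑(hg.homeomorph g) = g := rfl
    have himgcl : ∀ s : Set (PrimeSpectrum A), g '' closure s = closure (g '' s) := by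
      intro s
      have := (hg.homeomorph g).image_closure s
      rwa [hgcoe] at this
    have hv2 : PrimeSpectrum.vanishingIdeal
        (Subtype.val '' {m : MaxSpec A | p.asIdeal ≤ m.1.asIdeal}) = p.asIdeal := by
      ext x
      rw [PrimeSpectrum.mem_vanishingIdeal]
      constructor
      · intro h
        rw [← X_dense p, Submodule.mem_iInf]
        intro m
        exact h m.1.1 ⟨m.1, m.2, rfl⟩
      · rintro hx q ⟨m, hm, rfl⟩
        exact hm hx
    have h1 : closure ({p} : Set (PrimeSpectrum A))
        = closure (Subtype.val '' {m : MaxSpec A | p.asIdeal ≤ m.1.asIdeal}) := by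
      rw [← PrimeSpectrum.zeroLocus_vanishingIdeal_eq_closure,
        ← PrimeSpectrum.zeroLocus_vanishingIdeal_eq_closure,
        PrimeSpectrum.vanishingIdeal_singleton, hv2]
    have himg : g '' (Subtype.val '' {m : MaxSpec A | p.asIdeal ≤ m.1.asIdeal})
        = (fun n : PPrim B => n.1) '' (f '' {m : MaxSpec A | p.asIdeal ≤ m.1.asIdeal}) := by
      rw [← Set.image_comp, ← Set.image_comp]
      apply Set.image_congr
      intro m _
      exact hge m
    calc closure {g p} = closure (g '' {p}) := by rw [Set.image_singleton]
      _ = g '' closure {p} := (himgcl _).symm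
      _ = g '' closure (Subtype.val '' {m : MaxSpec A | p.asIdeal ≤ m.1.asIdeal}) := by rw [h1]
      _ = closure (g '' (Subtype.val '' {m : MaxSpec A | p.asIdeal ≤ m.1.asIdeal})) := himgcl _
      _ = _ := by rw [himg]
  have h'' := key f'' hh1 hh2
  have h' := key F' hhomeo hextF
  have hins : Inseparable (f'' p) (F' p) :=
    inseparable_iff_closure_eq.mpr (h''.trans h'.symm)
  exact hins.eq
end
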